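/- arXiv:0902.2559 — 8 statements merged into one kernel-verified Lean document; each statement's English description precedes it below -/
import Mathlib

section
/- If X and Y are Hermitian positive definite n×n matrices, then Tr[(X−Y)(Y⁻¹−X⁻¹)] ≥ 0. -/
open Matrix ComplexOrder
open scoped MatrixOrder

lemma posSemidef_trace_nonneg {n : ℕ} {A : Matrix (Fin n) (Fin n) ℂ}
    (hA : A.PosSemidef) : 0 ≤ A.trace := by
  rw [Matrix.trace]
  apply Finset.sum_nonneg
  intro i _
  have := hA.2 (Finsupp.single i 1)
  simpa [Finsupp.sum_single_index] using this

theorem trace_sub_mul_inv_sub_nonneg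
    {n : ℕ} (X Y : Matrix (Fin n) (Fin n) ℂ)
    (hX : X.PosDef) (hY : Y.PosDef) :
    0 ≤ ((X - Y) * (Y⁻¹ - X⁻¹)).trace := by
  have hXi := hX.inv.posSemidef
  have hYi := hY.inv.posSemidef
  set S := CFC.sqrt X⁻¹ with hS
  set T := CFC.sqrt Y⁻¹ with hT
  set A := X - Y with hA
  have hSS : S * S = X⁻¹ := CFC.sqrt_mul_sqrt_self X⁻¹ hXi.nonneg
  have hTT : T * T = Y⁻¹ := CFC.sqrt_mul_sqrt_self Y⁻¹ hYi.nonneg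
  have hAH : Aᴴ = A := (hX.1.sub hY.1)
  have hSH : Sᴴ = S := (CFC.sqrt_nonneg X⁻¹).posSemidef.1
  have hTH : Tᴴ = T := (CFC.sqrt_nonneg Y⁻¹).posSemidef.1
  have hXu : IsUnit X.det := (Matrix.isUnit_iff_isUnit_det X).mp hX.isUnit
  have hYu : IsUnit Y.det := (Matrix.isUnit_iff_isUnit_det Y).mp hY.isUnit
  have h1 : X * X⁻¹ = 1 := Matrix.mul_nonsing_inv X hXu
  have h2 : Y * Y⁻¹ = 1 := Matrix.mul_nonsing_inv Y hYu
  have h3 : X⁻¹ * X = 1 := Matrix.nonsing_inv_mul X hXu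
  have key : A * (Y⁻¹ - X⁻¹) = A * X⁻¹ * A * Y⁻¹ := by
    rw [hA]
    simp only [sub_mul, mul_sub, h1, h2]
    rw [one_mul, one_mul, mul_assoc Y X⁻¹ X, h3, mul_one, h2,
      mul_assoc (Y * X⁻¹) Y Y⁻¹, h2, mul_one]
  rw [key, ← hSS, ← hTT]
  have e1 : A * (S * S) * A * (T * T) = (A * (S * S) * A * T) * T := by
    noncomm_ring
  rw [e1, Matrix.trace_mul_comm]
  have e2 : T * (A * (S * S) * A * T) = (S * A * T)ᴴ * (S * A * T) := by
    rw [Matrix.conjTranspose_mul, Matrix.conjTranspose_mul, hAH, hSH, hTH]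
    noncomm_ring
  rw [e2]
  exact posSemidef_trace_nonneg (Matrix.posSemidef_conjTranspose_mul_self _)
end

section
/- For Hermitian positive definite matrices X and Y, if X ≠ Y then Tr[(X−Y)(Y⁻¹−X⁻¹)] > 0. -/
open Matrix ComplexOrder

private lemma diag_entry_eq {n : ℕ} (M : Matrix (Fin n) (Fin n) ℂ) (i : Fin n) :
    star (Pi.single i 1) ⬝ᵥ (M *ᵥ Pi.single i (1:ℂ)) = M i i := by
  simp [mulVec_single, dotProduct, Pi.single_apply, apply_ite]

private lemma col_zero_of_diag_zero {n : ℕ} {M : Matrix (Fin n) (Fin n) ℂ}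
    (hM : M.PosSemidef) {i : Fin n} (h : M i i = 0) : ∀ j, M j i = 0 := by
  have h0 : M *ᵥ Pi.single i (1:ℂ) = 0 := by
    rw [← hM.dotProduct_mulVec_zero_iff, diag_entry_eq, h]
  intro j
  have := congrFun h0 j
  simpa [mulVec_single] using this

private lemma trace_pos_of_posSemidef_ne_zero {n : ℕ} {M : Matrix (Fin n) (Fin n) ℂ}
    (hM : M.PosSemidef) (h : M ≠ 0) : 0 < M.trace := by
  have hdiag_nonneg : ∀ i, 0 ≤ M i i := fun i => by
    rw [← diag_entry_eq M i]; exact hM.dotProduct_mulVec_nonneg _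
  obtain ⟨j, i, hji⟩ : ∃ j i, M j i ≠ 0 := by
    by_contra hc
    push_neg at hc
    exact h (Matrix.ext fun j i => hc j i)
  have hii : M i i ≠ 0 := fun h0 => hji (col_zero_of_diag_zero hM h0 j)
  rw [Matrix.trace]
  exact Finset.sum_pos' (fun k _ => hdiag_nonneg k)
    ⟨i, Finset.mem_univ i, lt_of_le_of_ne (hdiag_nonneg i) (Ne.symm hii)⟩

theorem trace_sub_mul_inv_sub_pos
    {n : ℕ} (X Y : Matrix (Fin n) (Fin n) ℂ)
    (hX : X.PosDef) (hY : Y.PosDef) (hne : X ≠ Y) :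
    0 < ((X - Y) * (Y⁻¹ - X⁻¹)).trace := by
  set D := X - Y with hD
  have hDH : D.IsHermitian := hX.isHermitian.sub hY.isHermitian
  have hDne : D ≠ 0 := sub_ne_zero.mpr hne
  have hXinv : X⁻¹.PosDef := hX.inv
  have hYinv : Y⁻¹.PosDef := hY.inv
  have hXu : X * X⁻¹ = 1 := mul_nonsing_inv X hX.det_pos.ne'.isUnit
  have hXu' : X⁻¹ * X = 1 := nonsing_inv_mul X hX.det_pos.ne'.isUnit
  have hYu' : Y⁻¹ * Y = 1 := nonsing_inv_mul Y hY.det_pos.ne'.isUnit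
  -- square root of X⁻¹
  set B := (open scoped MatrixOrder in CFC.sqrt X⁻¹) with hBdef
  have hBB : B * B = X⁻¹ := open scoped MatrixOrder in CFC.sqrt_mul_sqrt_self X⁻¹ hXinv.posSemidef.nonneg
  have hBH : B.IsHermitian := open scoped MatrixOrder in (CFC.sqrt_nonneg X⁻¹).posSemidef.isHermitian
  -- key algebraic identity
  have key : Y⁻¹ - X⁻¹ = Y⁻¹ * D * X⁻¹ := by
    rw [hD, mul_sub, sub_mul, Matrix.mul_assoc, hXu, Matrix.mul_one, hYu', Matrix.one_mul]
  set E := D * B with hEdef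
  have hEH : Eᴴ = B * D := by rw [hEdef, conjTranspose_mul, hBH.eq, hDH.eq]
  set M := Eᴴ * Y⁻¹ * E with hMdef
  have hMpsd : M.PosSemidef := hYinv.posSemidef.conjTranspose_mul_mul_same E
  have htr : ((X - Y) * (Y⁻¹ - X⁻¹)).trace = M.trace := by
    rw [← hD, key, hMdef, hEH, hEdef, ← hBB]
    rw [show D * (Y⁻¹ * D * (B * B)) = (D * Y⁻¹ * D * B) * B by
      simp only [Matrix.mul_assoc]]
    rw [trace_mul_comm]
    simp only [Matrix.mul_assoc]
  -- E ≠ 0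
  have hEne : E ≠ 0 := by
    intro h0
    apply hDne
    have : D * X⁻¹ * X = D := by rw [Matrix.mul_assoc, hXu', Matrix.mul_one]
    rw [← this, ← hBB, show D * (B * B) * X = (D * B) * (B * X) by
      simp only [Matrix.mul_assoc], ← hEdef, h0, Matrix.zero_mul]
  -- M ≠ 0
  have hMne : M ≠ 0 := by
    obtain ⟨j, i, hji⟩ : ∃ j i, E j i ≠ 0 := by
      by_contra hc
      push_neg at hc
      exact hEne (Matrix.ext fun j i => hc j i)
    have hEx : E *ᵥ Pi.single i (1:ℂ) ≠ 0 := by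
      intro h0
      apply hji
      have := congrFun h0 j
      simpa [mulVec_single] using this
    intro h0
    have hform : star (Pi.single i (1:ℂ)) ⬝ᵥ (M *ᵥ Pi.single i 1) = 0 := by
      rw [h0]; simp
    rw [hMdef] at hform
    have : star (E *ᵥ Pi.single i (1:ℂ)) ⬝ᵥ (Y⁻¹ *ᵥ (E *ᵥ Pi.single i 1)) = 0 := by
      simpa only [star_mulVec, dotProduct_mulVec, vecMul_vecMul] using hform
    exact absurd this (hYinv.dotProduct_mulVec_pos hEx).ne'
  rw [htr]
  exact trace_pos_of_posSemidef_ne_zero hMpsd hMne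
end

section
/- Let A', A'', B', B'' be Hermitian positive semidefinite n×n matrices such that A' ⪰ A'' or A'' ⪰ A', and B' ⪰ B'' or B'' ⪰ B'. Define M = (A''−A')[(I+A')⁻¹ − (I+A'')⁻¹] and N = (B''−B')[(I+B'+A')⁻¹ − (I+B''+A'')⁻¹]. Then Tr(M+N) ≥ 0. -/
open Matrix ComplexOrder
variable {n : ℕ}


lemma tr_ct_mul_self_nonneg (W : Matrix (Fin n) (Fin n) ℂ) : 0 ≤ (Wᴴ * W).trace := by
  rw [Matrix.trace]
  refine Finset.sum_nonneg fun i _ => ?_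
  rw [Matrix.diag_apply, Matrix.mul_apply]
  refine Finset.sum_nonneg fun k _ => ?_
  rw [Matrix.conjTranspose_apply]
  exact star_mul_self_nonneg _

open scoped MatrixOrder in
lemma q_nonneg {U V Z : Matrix (Fin n) (Fin n) ℂ} (hU : U.PosSemidef) (hV : V.PosSemidef)
    (hZ : Zᴴ = Z) : 0 ≤ (Z * U * Z * V).trace := by
  have hu : CFC.sqrt U * CFC.sqrt U = U := CFC.sqrt_mul_sqrt_self U hU.nonneg
  have hv : CFC.sqrt V * CFC.sqrt V = V := CFC.sqrt_mul_sqrt_self V hV.nonneg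
  set u := CFC.sqrt U
  set v := CFC.sqrt V
  have huh : uᴴ = u := (CFC.sqrt_nonneg U).posSemidef.isHermitian
  have hvh : vᴴ = v := (CFC.sqrt_nonneg V).posSemidef.isHermitian
  have key : ((u * Z * v)ᴴ * (u * Z * v)).trace = (Z * U * Z * V).trace := by
    rw [conjTranspose_mul, conjTranspose_mul, huh, hvh, hZ]
    have h1 : v * (Z * u) * (u * Z * v) = v * (Z * U * Z * v) := by
      rw [← hu]; noncomm_ring
    rw [h1, trace_mul_comm]
    have h2 : Z * U * Z * v * v = Z * U * Z * V := by rw [← hv]; noncomm_ring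
    rw [h2]
  rw [← key]
  exact tr_ct_mul_self_nonneg _

lemma myInvSubInv {X Y : Matrix (Fin n) (Fin n) ℂ} (hX : X.PosDef) (hY : Y.PosDef) :
    X⁻¹ - Y⁻¹ = X⁻¹ * (Y - X) * Y⁻¹ := by
  have hXd : IsUnit X.det := isUnit_iff_ne_zero.mpr hX.det_pos.ne'
  have hYd : IsUnit Y.det := isUnit_iff_ne_zero.mpr hY.det_pos.ne'
  rw [Matrix.mul_sub, Matrix.nonsing_inv_mul _ hXd, Matrix.sub_mul, one_mul,
    Matrix.mul_assoc, Matrix.mul_nonsing_inv _ hYd, Matrix.mul_one]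

lemma inv_antitone {X Y : Matrix (Fin n) (Fin n) ℂ} (hX : X.PosDef) (hY : Y.PosDef)
    (h : (Y - X).PosSemidef) : (X⁻¹ - Y⁻¹).PosSemidef := by
  have hXd : IsUnit X.det := isUnit_iff_ne_zero.mpr hX.det_pos.ne'
  have hYd : IsUnit Y.det := isUnit_iff_ne_zero.mpr hY.det_pos.ne'
  have e1 : X * X⁻¹ = 1 := Matrix.mul_nonsing_inv _ hXd
  have e2 : X⁻¹ * X = 1 := Matrix.nonsing_inv_mul _ hXd
  have e4 : Y⁻¹ * Y = 1 := Matrix.nonsing_inv_mul _ hYd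
  have hih : (X⁻¹ - Y⁻¹)ᴴ = X⁻¹ - Y⁻¹ := by
    rw [conjTranspose_sub, hX.inv.isHermitian, hY.inv.isHermitian]
  have hiy : (Y⁻¹)ᴴ = Y⁻¹ := hY.inv.isHermitian
  have key : (X⁻¹ - Y⁻¹) * X * (X⁻¹ - Y⁻¹)ᴴ + Y⁻¹ * (Y - X) * (Y⁻¹)ᴴ = X⁻¹ - Y⁻¹ := by
    rw [hih, hiy]
    have expand : (X⁻¹ - Y⁻¹) * X * (X⁻¹ - Y⁻¹) + Y⁻¹ * (Y - X) * Y⁻¹ =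
        (X⁻¹ * X) * X⁻¹ - (X⁻¹ * X) * Y⁻¹ - Y⁻¹ * (X * X⁻¹) + Y⁻¹ * X * Y⁻¹
          + (Y⁻¹ * Y) * Y⁻¹ - Y⁻¹ * X * Y⁻¹ := by noncomm_ring
    rw [expand, e1, e2, e4]
    simp only [one_mul, Matrix.mul_one]
    abel
  rw [← key]
  exact (hX.posSemidef.mul_mul_conjTranspose_same _).add (h.mul_mul_conjTranspose_same _)


lemma star_trace_four {A B C F : Matrix (Fin n) (Fin n) ℂ}
    (hA : Aᴴ = A) (hB : Bᴴ = B) (hC : Cᴴ = C) (hF : Fᴴ = F) :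
    star (A * B * C * F).trace = (C * B * A * F).trace := by
  rw [← Matrix.trace_conjTranspose]
  have h : (A * B * C * F)ᴴ = F * (C * B * A) := by
    simp only [conjTranspose_mul, hA, hB, hC, hF, Matrix.mul_assoc]
  rw [h, Matrix.trace_mul_comm]
theorem trace_M_add_N_nonneg
    {n : ℕ} (A' A'' B' B'' : Matrix (Fin n) (Fin n) ℂ)
    (hA' : A'.PosSemidef) (hA'' : A''.PosSemidef)
    (hB' : B'.PosSemidef) (hB'' : B''.PosSemidef)
    (hAtot : (A' - A'').PosSemidef ∨ (A'' - A').PosSemidef)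
    (hBtot : (B' - B'').PosSemidef ∨ (B'' - B').PosSemidef)
    (M N : Matrix (Fin n) (Fin n) ℂ)
    (hM : M = (A'' - A') * ((1 + A')⁻¹ - (1 + A'')⁻¹))
    (hN : N = (B'' - B') * ((1 + B' + A')⁻¹ - (1 + B'' + A'')⁻¹)) :
    0 ≤ (M + N).trace := by
  clear hAtot hBtot
  have hA1 : (1 + A').PosDef := Matrix.PosDef.one.add_posSemidef hA'
  have hA2 : (1 + A'').PosDef := Matrix.PosDef.one.add_posSemidef hA''
  have hS1 : (1 + B' + A').PosDef := (Matrix.PosDef.one.add_posSemidef hB').add_posSemidef hA'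
  have hT1 : (1 + B'' + A'').PosDef := (Matrix.PosDef.one.add_posSemidef hB'').add_posSemidef hA''
  set D := A'' - A' with hDdef
  set E := B'' - B' with hEdef
  have hD : Dᴴ = D := hA''.isHermitian.sub hA'.isHermitian
  have hE : Eᴴ = E := hB''.isHermitian.sub hB'.isHermitian
  have hG : (E + D)ᴴ = E + D := by rw [conjTranspose_add, hD, hE]
  set P := (1 + A')⁻¹ with hPdef
  set Q := (1 + A'')⁻¹ with hQdef
  set S := (1 + B' + A')⁻¹ with hSdef
  set T := (1 + B'' + A'')⁻¹ with hTdef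
  have hP : Pᴴ = P := hA1.inv.isHermitian
  have hQ : Qᴴ = Q := hA2.inv.isHermitian
  have hS : Sᴴ = S := hS1.inv.isHermitian
  have hT : Tᴴ = T := hT1.inv.isHermitian
  -- inverse difference identities
  have hPQ : P - Q = P * D * Q := by
    rw [hPdef, hQdef, myInvSubInv hA1 hA2]
    congr 2
    rw [hDdef]; abel
  have hST : S - T = S * (E + D) * T := by
    rw [hSdef, hTdef, myInvSubInv hS1 hT1]
    congr 2
    rw [hEdef, hDdef]; abel
  have hMeq : M = D * (P * D * Q) := by rw [hM, hPQ]
  have hNeq : N = E * (S * (E + D) * T) := by rw [hN, hST]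
  -- trace abbreviations
  have hMa : M.trace = (D * P * D * Q).trace := by rw [hMeq]; congr 1; noncomm_ring
  have hNa : N.trace = (E * S * E * T).trace + (E * S * D * T).trace := by
    rw [hNeq, ← trace_add]; congr 1; noncomm_ring
  -- star facts
  have hsa : star (D * P * D * Q).trace = (D * P * D * Q).trace := star_trace_four hD hP hD hQ
  have hsb : star (E * S * E * T).trace = (E * S * E * T).trace := star_trace_four hE hS hE hT
  have hsc : star (E * S * D * T).trace = (D * S * E * T).trace := star_trace_four hE hS hD hT
  -- reality of the total trace
  have hMr : star M.trace = M.trace := by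
    rw [hM, ← Matrix.trace_conjTranspose, conjTranspose_mul]
    have h1 : (P - Q)ᴴ = P - Q := by rw [conjTranspose_sub, hP, hQ]
    rw [h1, hD, Matrix.trace_mul_comm]
  have hNr : star N.trace = N.trace := by
    rw [hN, ← Matrix.trace_conjTranspose, conjTranspose_mul]
    have h1 : (S - T)ᴴ = S - T := by rw [conjTranspose_sub, hS, hT]
    rw [h1, hE, Matrix.trace_mul_comm]
  -- expansion of the quadratic form at E + D
  have hf : ((E + D) * S * (E + D) * T).trace
      = (E * S * E * T).trace + (E * S * D * T).trace
        + (D * S * E * T).trace + (D * S * D * T).trace := by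
    rw [← trace_add, ← trace_add, ← trace_add]; congr 1; noncomm_ring
  -- monotonicity pieces
  have hPS : (P - S).PosSemidef := by
    refine inv_antitone hA1 hS1 ?_
    have h1 : 1 + B' + A' - (1 + A') = B' := by abel
    rw [h1]; exact hB'
  have hQT : (Q - T).PosSemidef := by
    refine inv_antitone hA2 hT1 ?_
    have h1 : 1 + B'' + A'' - (1 + A'') = B'' := by abel
    rw [h1]; exact hB''
  have had : (D * P * D * Q).trace - (D * S * D * T).trace
      = (D * (P - S) * D * Q).trace + (D * S * D * (Q - T)).trace := by
    rw [← trace_add, ← trace_sub]; congr 1; noncomm_ring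
  -- nonnegativity pieces
  have h_a : 0 ≤ (D * P * D * Q).trace := q_nonneg hA1.inv.posSemidef hA2.inv.posSemidef hD
  have h_b : 0 ≤ (E * S * E * T).trace := q_nonneg hS1.inv.posSemidef hT1.inv.posSemidef hE
  have h_f : 0 ≤ ((E + D) * S * (E + D) * T).trace :=
    q_nonneg hS1.inv.posSemidef hT1.inv.posSemidef hG
  have h_ad : 0 ≤ (D * P * D * Q).trace - (D * S * D * T).trace := by
    rw [had]
    exact add_nonneg (q_nonneg hPS hA2.inv.posSemidef hD) (q_nonneg hS1.inv.posSemidef hQT hD)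
  -- key identity: z + z equals a nonneg combination
  have key : (M + N).trace + (M + N).trace
      = ((D * P * D * Q).trace - (D * S * D * T).trace) + (D * P * D * Q).trace
        + ((E * S * E * T).trace + ((E + D) * S * (E + D) * T).trace) := by
    have e1 : (M + N).trace + (M + N).trace
        = (M.trace + N.trace) + star (M.trace + N.trace) := by
      rw [star_add, hMr, hNr, trace_add]
    rw [e1, star_add, hMa, hNa, star_add, hsa, hsb, hsc, hf]
    ring
  have hnn : 0 ≤ (M + N).trace + (M + N).trace := by
    rw [key]
    exact add_nonneg (add_nonneg h_ad h_a) (add_nonneg h_b h_f)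
  rw [Complex.le_def] at hnn ⊢
  simp only [Complex.add_re, Complex.add_im, Complex.zero_re, Complex.zero_im] at hnn ⊢
  exact ⟨by linarith [hnn.1], by linarith [hnn.2]⟩
end

section
/- If A ⪰ B ≻ 0 and C ⪰ D ⪰ 0 are Hermitian matrices, then Tr{(A−B)(B⁻¹−A⁻¹) + (C−D)[(B+D)⁻¹ − (A+C)⁻¹]} ≥ 0. -/
open Matrix ComplexOrder

variable {n : ℕ}

open scoped MatrixOrder in
noncomputable def Matrix.PosSemidef.sqrt {A : Matrix (Fin n) (Fin n) ℂ} (_ : A.PosSemidef) :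
    Matrix (Fin n) (Fin n) ℂ := CFC.sqrt A

open scoped MatrixOrder in
lemma Matrix.PosSemidef.sqrt_mul_self {A : Matrix (Fin n) (Fin n) ℂ} (hA : A.PosSemidef) :
    hA.sqrt * hA.sqrt = A := CFC.sqrt_mul_sqrt_self A hA.nonneg

open scoped MatrixOrder in
lemma Matrix.PosSemidef.posSemidef_sqrt {A : Matrix (Fin n) (Fin n) ℂ} (hA : A.PosSemidef) :
    hA.sqrt.PosSemidef := (CFC.sqrt_nonneg A).posSemidef

lemma sqrt_det_ne {X : Matrix (Fin n) (Fin n) ℂ} (hX : X.PosSemidef)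
    (hdet : X.det ≠ 0) : hX.inv.sqrt.det ≠ 0 := by
  intro h
  have h2 : hX.inv.sqrt * hX.inv.sqrt = X⁻¹ := hX.inv.sqrt_mul_self
  have : X⁻¹.det = 0 := by rw [← h2, det_mul, h, mul_zero]
  rw [det_nonsing_inv] at this
  exact hdet (by simpa using this)

lemma key_SXS {X : Matrix (Fin n) (Fin n) ℂ} (hX : X.PosSemidef)
    (hdet : X.det ≠ 0) : hX.inv.sqrt * X * hX.inv.sqrt = 1 := by
  set S := hX.inv.sqrt with hS
  have h2 : S * S = X⁻¹ := hX.inv.sqrt_mul_self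
  have hSd : S.det ≠ 0 := sqrt_det_ne hX hdet
  have hXe : X = S⁻¹ * S⁻¹ := by
    rw [← Matrix.mul_inv_rev, h2, nonsing_inv_nonsing_inv _ (isUnit_iff_ne_zero.mpr hdet)]
  rw [hXe, ← mul_assoc, mul_assoc (S * S⁻¹), mul_nonsing_inv _ (isUnit_iff_ne_zero.mpr hSd),
    nonsing_inv_mul _ (isUnit_iff_ne_zero.mpr hSd), one_mul]

lemma inv_antitone_s6 {A B : Matrix (Fin n) (Fin n) ℂ}
    (hA : A.PosDef) (hB : B.PosDef) (hAB : (A - B).PosSemidef) :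
    (B⁻¹ - A⁻¹).PosSemidef := by
  set T := hB.posSemidef.inv.sqrt with hT
  have hTH : T.IsHermitian := hB.posSemidef.inv.posSemidef_sqrt.isHermitian
  have hT2 : T * T = B⁻¹ := hB.posSemidef.inv.sqrt_mul_self
  have hBd : B.det ≠ 0 := hB.det_pos.ne'
  have hAd : A.det ≠ 0 := hA.det_pos.ne'
  have hTd : T.det ≠ 0 := sqrt_det_ne hB.posSemidef hBd
  have hTBT : T * B * T = 1 := key_SXS hB.posSemidef hBd
  set M := T * A * T with hM
  have hMpsd : M.PosSemidef := by
    have := hA.posSemidef.conjTranspose_mul_mul_same T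
    rwa [hTH.eq] at this
  have hMd : M.det ≠ 0 := by
    simp only [hM, det_mul]
    exact mul_ne_zero (mul_ne_zero hTd hAd) hTd
  have hM1 : (M - 1).PosSemidef := by
    have := hAB.conjTranspose_mul_mul_same T
    rwa [hTH.eq, mul_sub, sub_mul, hTBT] at this
  set S := hMpsd.inv.sqrt with hSdef
  have hSH : S.IsHermitian := hMpsd.inv.posSemidef_sqrt.isHermitian
  have hS2 : S * S = M⁻¹ := hMpsd.inv.sqrt_mul_self
  have hSMS : S * M * S = 1 := key_SXS hMpsd hMd
  have h1M : (1 - M⁻¹).PosSemidef := by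
    have := hM1.conjTranspose_mul_mul_same S
    rwa [hSH.eq, mul_sub, sub_mul, hSMS, mul_one, hS2] at this
  have hMinv : T * M⁻¹ * T = A⁻¹ := by
    rw [hM, Matrix.mul_inv_rev, Matrix.mul_inv_rev, ← mul_assoc, ← mul_assoc,
      mul_nonsing_inv _ (isUnit_iff_ne_zero.mpr hTd), one_mul, mul_assoc, nonsing_inv_mul _ (isUnit_iff_ne_zero.mpr hTd), mul_one]
  have := h1M.conjTranspose_mul_mul_same T
  rwa [hTH.eq, mul_sub, sub_mul, mul_one, hT2, hMinv] at this

lemma trace_mul_psd_nonneg {P Q : Matrix (Fin n) (Fin n) ℂ}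
    (hP : P.PosSemidef) (hQ : Q.PosSemidef) : 0 ≤ (P * Q).trace := by
  have hS2 : hP.sqrt * hP.sqrt = P := hP.sqrt_mul_self
  have hSH : hP.sqrt.IsHermitian := hP.posSemidef_sqrt.isHermitian
  have h : (P * Q).trace = (hP.sqrt * Q * hP.sqrt).trace := by
    have hPQ : P * Q = hP.sqrt * (hP.sqrt * Q) := by rw [← mul_assoc, hS2]
    rw [hPQ, trace_mul_comm, mul_assoc]
  have hpsd : (hP.sqrt * Q * hP.sqrt).PosSemidef := by
    have := hQ.conjTranspose_mul_mul_same hP.sqrt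
    rwa [hSH.eq] at this
  rw [h]
  rw [trace]
  apply Finset.sum_nonneg
  intro i _
  have := hpsd.diag_nonneg (i := i)
  simpa using this

theorem trace_case1_nonneg
    {n : ℕ} (A B C D : Matrix (Fin n) (Fin n) ℂ)
    (hA : A.PosDef) (hB : B.PosDef)
    (hAB : (A - B).PosSemidef)
    (hC : C.PosSemidef) (hD : D.PosSemidef)
    (hCD : (C - D).PosSemidef) :
    0 ≤ ((A - B) * (B⁻¹ - A⁻¹) + (C - D) * ((B + D)⁻¹ - (A + C)⁻¹)).trace := by
  rw [trace_add]
  have h1 := trace_mul_psd_nonneg hAB (inv_antitone_s6 hA hB hAB)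
  have hAC : (A + C).PosDef := hA.add_posSemidef hC
  have hBD : (B + D).PosDef := hB.add_posSemidef hD
  have hsub : ((A + C) - (B + D)).PosSemidef := by
    have := hAB.add hCD
    convert this using 1
    abel
  have h2 := trace_mul_psd_nonneg hCD (inv_antitone_s6 hAC hBD hsub)
  exact add_nonneg h1 h2
end

section
/- For n×n Hermitian matrices X and Y, Tr(XY) ≥ Σ_{i=1}^n λ_X(i) λ_Y(n−i+1), where λ_X(1) ≤ ... ≤ λ_X(n) and λ_Y(1) ≤ ... ≤ λ_Y(n) are the eigenvalues in increasing order (the trace of a product is bounded below by the anti-ordered pairing of eigenvalues). -/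
open Matrix ComplexOrder Finset

private lemma rc_ofReal (x : ℝ) : (RCLike.ofReal x : ℂ) = Complex.ofReal x := rfl

-- block mass lemma
lemma ds_block {n : ℕ} (S : Fin n → Fin n → ℝ) (hS : ∀ i j, 0 ≤ S i j)
    (hrow : ∀ i, ∑ j, S i j = 1) (hcol : ∀ j, ∑ i, S i j = 1)
    (A B : Finset (Fin n)) :
    (A.card : ℝ) + B.card - n ≤ ∑ i ∈ A, ∑ j ∈ B, S i j := by
  have h1 : ∀ i, ∑ j ∈ B, S i j = 1 - ∑ j ∈ Bᶜ, S i j := by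
    intro i
    have h := Finset.sum_add_sum_compl B (S i)
    rw [hrow i] at h
    linarith
  have h2 : ∑ i ∈ A, ∑ j ∈ Bᶜ, S i j ≤ ∑ i, ∑ j ∈ Bᶜ, S i j :=
    Finset.sum_le_sum_of_subset_of_nonneg (Finset.subset_univ A)
      (fun i _ _ => Finset.sum_nonneg fun j _ => hS i j)
  have h3 : ∑ i, ∑ j ∈ Bᶜ, S i j = (Bᶜ.card : ℝ) := by
    rw [Finset.sum_comm]
    simp [hcol]
  have h4 : (Bᶜ.card : ℝ) = n - B.card := by
    rw [Finset.card_compl]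
    push_cast [Nat.cast_sub (Finset.card_le_univ B)]
    simp
  simp only [h1, Finset.sum_sub_distrib, Finset.sum_const, nsmul_eq_mul, mul_one]
  have : ∑ i ∈ A, ∑ j ∈ Bᶜ, S i j ≤ (n : ℝ) - B.card := by
    rw [← h4, ← h3]; exact h2
  linarith


lemma ds_step {n : ℕ} (S : Fin n → Fin n → ℝ) (hS : ∀ i j, 0 ≤ S i j)
    (hrow : ∀ i, ∑ j, S i j = 1) (hcol : ∀ j, ∑ i, S i j = 1)
    (p q : Fin n) :
    ∑ i, (if p ≤ i then (1:ℝ) else 0) * (if q ≤ i.rev then 1 else 0)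
      ≤ ∑ i, ∑ j, S i j * ((if p ≤ i then (1:ℝ) else 0) * (if q ≤ j then 1 else 0)) := by
  have hrev : ∀ i : Fin n, (q ≤ i.rev ↔ i ≤ q.rev) := fun i => by
    rw [← Fin.rev_rev i, Fin.rev_le_rev, Fin.rev_rev]
  have hR : ∑ i, ∑ j, S i j * ((if p ≤ i then (1:ℝ) else 0) * (if q ≤ j then 1 else 0))
      = ∑ i ∈ Finset.Ici p, ∑ j ∈ Finset.Ici q, S i j := by
    have e1 : Finset.Ici p = Finset.univ.filter (fun i => p ≤ i) := by ext i; simp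
    have e2 : Finset.Ici q = Finset.univ.filter (fun j => q ≤ j) := by ext j; simp
    rw [e1, e2, Finset.sum_filter]
    refine Finset.sum_congr rfl fun i _ => ?_
    rw [Finset.sum_filter]
    by_cases h : p ≤ i <;> simp [h, mul_ite]
  have hL : ∑ i, (if p ≤ i then (1:ℝ) else 0) * (if q ≤ i.rev then 1 else 0)
      = ((Finset.Icc p q.rev).card : ℝ) := by
    have e3 : Finset.Icc p q.rev = Finset.univ.filter (fun i => p ≤ i ∧ i ≤ q.rev) := by
      ext i; simp [Finset.mem_Icc]
    rw [e3, Finset.card_filter]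
    push_cast
    refine Finset.sum_congr rfl fun i _ => ?_
    by_cases h1 : p ≤ i <;> by_cases h2 : i ≤ q.rev <;>
      simp [h1, h2, hrev i]
  rw [hR, hL]
  by_cases hpq : p.val + q.val < n
  · refine le_trans ?_ (ds_block S hS hrow hcol _ _)
    rw [Fin.card_Icc, Fin.card_Ici, Fin.card_Ici, Fin.val_rev]
    have hp := p.isLt; have hq := q.isLt
    have c1 : ((n - (q.val + 1) + 1 - p.val : ℕ):ℝ) = (n:ℝ) - p.val - q.val := by
      have e : n - (q.val + 1) + 1 - p.val + q.val + p.val = n := by omega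
      have := congrArg (Nat.cast : ℕ → ℝ) e
      push_cast at this
      linarith
    have c2 : ((n - p.val : ℕ):ℝ) = (n:ℝ) - p.val := by
      have e : n - p.val + p.val = n := by omega
      have := congrArg (Nat.cast : ℕ → ℝ) e
      push_cast at this
      linarith
    have c3 : ((n - q.val : ℕ):ℝ) = (n:ℝ) - q.val := by
      have e : n - q.val + q.val = n := by omega
      have := congrArg (Nat.cast : ℕ → ℝ) e
      push_cast at this
      linarith
    rw [c1, c2, c3]
    linarith
  · rw [Fin.card_Icc, Fin.val_rev, (by omega : n - (q.val + 1) + 1 - p.val = 0)]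
    simp only [Nat.cast_zero]
    exact Finset.sum_nonneg fun i _ => Finset.sum_nonneg fun j _ => hS i j

lemma mono_decomp {n : ℕ} (a : Fin n → ℝ) (ha : Monotone a) :
    ∃ d : Fin n → ℝ, (∀ t : Fin n, 0 < t.val → 0 ≤ d t) ∧
      ∀ i, a i = ∑ t, (if t ≤ i then d t else 0) := by
  refine ⟨fun t => if h : 0 < t.val then a t - a ⟨t.val - 1, by omega⟩ else a t, ?_, ?_⟩
  · intro t ht
    simp only [ht, dif_pos]
    have : (⟨t.val - 1, by omega⟩ : Fin n) ≤ t := by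
      simp [Fin.le_def]
    linarith [ha this]
  · intro i
    have hn : 0 < n := i.pos
    set d : Fin n → ℝ := fun t => if h : 0 < t.val then a t - a ⟨t.val - 1, by omega⟩ else a t
      with hd
    set d' : ℕ → ℝ := fun k => if h : k < n then d ⟨k, h⟩ else 0 with hd'
    set g : ℕ → ℝ := fun k => a ⟨min k (n-1), by omega⟩ with hg
    have step1 : ∑ t : Fin n, (if t ≤ i then d t else 0)
        = ∑ k ∈ Finset.range n, (if k ≤ i.val then d' k else 0) := by
      rw [← Fin.sum_univ_eq_sum_range (fun k => if k ≤ i.val then d' k else 0) n]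
      refine Finset.sum_congr rfl fun t _ => ?_
      by_cases h : (t:ℕ) ≤ (i:ℕ)
      · rw [if_pos (Fin.le_def.mpr h), if_pos h]
        simp [hd', t.isLt]
      · rw [if_neg (fun hc => h (Fin.le_def.mp hc)), if_neg h]
    have step2 : ∑ k ∈ Finset.range n, (if k ≤ i.val then d' k else 0)
        = ∑ k ∈ Finset.range (i.val + 1), d' k := by
      rw [← Finset.sum_subset (Finset.range_subset_range.mpr (by omega : i.val + 1 ≤ n))
        (fun x _ hx => by rw [Finset.mem_range, not_lt] at hx; rw [if_neg (by omega)])]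
      refine Finset.sum_congr rfl fun k hk => ?_
      rw [Finset.mem_range] at hk
      rw [if_pos (by omega)]
    have step3 : ∑ k ∈ Finset.range (i.val + 1), d' k = a i := by
      rw [Finset.sum_range_succ']
      have e0 : d' 0 = g 0 := by
        simp [hd', hd, hg, hn]
      have e1 : ∀ k ∈ Finset.range i.val, d' (k + 1) = g (k + 1) - g k := by
        intro k hk
        rw [Finset.mem_range] at hk
        have hk1 : k + 1 < n := by omega
        have m1 : min (k+1) (n-1) = k + 1 := by omega
        have m2 : min k (n-1) = k := by omega
        simp only [hd', hd, hg, dif_pos hk1, dif_pos (by omega : 0 < k + 1)]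
        congr 2 <;> simp [m1, m2]
      rw [Finset.sum_congr rfl e1, Finset.sum_range_sub g i.val, e0]
      have : g i.val = a i := by
        simp only [hg]
        congr 1
        exact Fin.ext (by simpa using by omega : min i.val (n-1) = i.val)
      rw [this]; ring
    rw [step1, step2, step3]

lemma ds_key {n : ℕ} (S : Fin n → Fin n → ℝ) (hS : ∀ i j, 0 ≤ S i j)
    (hrow : ∀ i, ∑ j, S i j = 1) (hcol : ∀ j, ∑ i, S i j = 1)
    (a b : Fin n → ℝ) (ha : Monotone a) (hb : Monotone b) :
    ∑ i, a i * b i.rev ≤ ∑ i, ∑ j, S i j * (a i * b j) := by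
  classical
  obtain ⟨d, hd0, hda⟩ := mono_decomp a ha
  obtain ⟨e, he0, heb⟩ := mono_decomp b hb
  set χ : Fin n → Fin n → ℝ := fun t i => if t ≤ i then 1 else 0 with hχ
  have hax : ∀ i, a i = ∑ t, d t * χ t i := by
    intro i; rw [hda i]
    exact Finset.sum_congr rfl fun t _ => by by_cases h : t ≤ i <;> simp [hχ, h]
  have hbx : ∀ i, b i = ∑ t, e t * χ t i := by
    intro i; rw [heb i]
    exact Finset.sum_congr rfl fun t _ => by by_cases h : t ≤ i <;> simp [hχ, h]
  have hLHS : ∑ i, a i * b i.rev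
      = ∑ t, ∑ l, d t * e l * ∑ i, χ t i * χ l i.rev := by
    have h1 : ∀ i : Fin n, a i * b i.rev = ∑ t, ∑ l, d t * e l * (χ t i * χ l i.rev) := by
      intro i
      rw [hax i, hbx i.rev, Finset.sum_mul_sum]
      exact Finset.sum_congr rfl fun t _ => Finset.sum_congr rfl fun l _ => by ring
    rw [Finset.sum_congr rfl fun i _ => h1 i, Finset.sum_comm]
    refine Finset.sum_congr rfl fun t _ => ?_
    rw [Finset.sum_comm]
    exact Finset.sum_congr rfl fun l _ => by rw [Finset.mul_sum]
  have hRHS : ∑ i, ∑ j, S i j * (a i * b j)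
      = ∑ t, ∑ l, d t * e l * ∑ i, ∑ j, S i j * (χ t i * χ l j) := by
    have h1 : ∀ i j, S i j * (a i * b j) = ∑ t, ∑ l, d t * e l * (S i j * (χ t i * χ l j)) := by
      intro i j
      rw [hax i, hbx j, show S i j * ((∑ t, d t * χ t i) * (∑ l, e l * χ l j))
          = ((∑ t, d t * χ t i) * (∑ l, e l * χ l j)) * S i j from by ring,
        Finset.sum_mul_sum, Finset.sum_mul]
      exact Finset.sum_congr rfl fun t _ => by
        rw [Finset.sum_mul]; exact Finset.sum_congr rfl fun l _ => by ring
    rw [Finset.sum_congr rfl fun i _ => Finset.sum_congr rfl fun j _ => h1 i j]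
    rw [Finset.sum_congr rfl fun i (_ : i ∈ Finset.univ) => Finset.sum_comm, Finset.sum_comm]
    refine Finset.sum_congr rfl fun t _ => ?_
    rw [Finset.sum_congr rfl fun i (_ : i ∈ Finset.univ) => Finset.sum_comm, Finset.sum_comm]
    refine Finset.sum_congr rfl fun l _ => ?_
    rw [Finset.mul_sum]
    exact Finset.sum_congr rfl fun i _ => by rw [Finset.mul_sum]
  rw [hLHS, hRHS]
  refine Finset.sum_le_sum fun t _ => Finset.sum_le_sum fun l _ => ?_
  by_cases ht : t.val = 0
  · -- χ t i = 1 always; both inner sums equal ∑ j, χ l j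
    have hχt : ∀ i, χ t i = 1 := fun i => by
      simp [hχ, show t ≤ i from Fin.le_def.mpr (by omega)]
    have hA : ∑ i, χ t i * χ l i.rev = ∑ j, χ l j := by
      simp only [hχt, one_mul]
      exact Fintype.sum_equiv Fin.revPerm _ _ (fun i => rfl)
    have hB : ∑ i, ∑ j, S i j * (χ t i * χ l j) = ∑ j, χ l j := by
      simp only [hχt, one_mul]
      rw [Finset.sum_comm]
      refine Finset.sum_congr rfl fun j _ => ?_
      rw [← Finset.sum_mul, hcol j, one_mul]
    rw [hA, hB]
  · by_cases hl : l.val = 0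
    · have hχl : ∀ j, χ l j = 1 := fun j => by
        simp [hχ, show l ≤ j from Fin.le_def.mpr (by omega)]
      have hA : ∑ i, χ t i * χ l i.rev = ∑ i, χ t i := by
        simp only [hχl, mul_one]
      have hB : ∑ i, ∑ j, S i j * (χ t i * χ l j) = ∑ i, χ t i := by
        simp only [hχl, mul_one]
        refine Finset.sum_congr rfl fun i _ => ?_
        calc ∑ j, S i j * χ t i = (∑ j, S i j) * χ t i := by rw [Finset.sum_mul]
        _ = χ t i := by rw [hrow i, one_mul]
      rw [hA, hB]
    · have hde : 0 ≤ d t * e l := mul_nonneg (hd0 t (by omega)) (he0 l (by omega))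
      exact mul_le_mul_of_nonneg_left (by simpa [hχ] using ds_step S hS hrow hcol t l) hde

/-- Trace of a product of Hermitian matrices is bounded below by the
anti-ordered pairing of their eigenvalues (listed in increasing order). -/
theorem trace_mul_ge_antiordered_eigenvalue_pairing
    {n : ℕ} (X Y : Matrix (Fin n) (Fin n) ℂ)
    (hX : X.IsHermitian) (hY : Y.IsHermitian)
    (μX μY : Fin n → ℝ) (hμX : Monotone μX) (hμY : Monotone μY)
    (hpermX : ∃ σ : Equiv.Perm (Fin n), μX = hX.eigenvalues ∘ σ)
    (hpermY : ∃ σ : Equiv.Perm (Fin n), μY = hY.eigenvalues ∘ σ) :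
    ((∑ i, μX i * μY i.rev : ℝ) : ℂ) ≤ (X * Y).trace := by
  classical
  obtain ⟨σ, hσ⟩ := hpermX
  obtain ⟨τ, hτ⟩ := hpermY
  set Ux : Matrix (Fin n) (Fin n) ℂ := (hX.eigenvectorUnitary : Matrix (Fin n) (Fin n) ℂ)
    with hUx
  set Uy : Matrix (Fin n) (Fin n) ℂ := (hY.eigenvectorUnitary : Matrix (Fin n) (Fin n) ℂ)
    with hUy
  have hx1 : Ux * star Ux = 1 := Matrix.mem_unitaryGroup_iff.mp hX.eigenvectorUnitary.2
  have hx2 : star Ux * Ux = 1 := Matrix.mem_unitaryGroup_iff'.mp hX.eigenvectorUnitary.2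
  have hy1 : Uy * star Uy = 1 := Matrix.mem_unitaryGroup_iff.mp hY.eigenvectorUnitary.2
  have hy2 : star Uy * Uy = 1 := Matrix.mem_unitaryGroup_iff'.mp hY.eigenvectorUnitary.2
  set V : Matrix (Fin n) (Fin n) ℂ := star Ux * Uy with hV
  have hsV : star V = star Uy * Ux := by rw [hV, StarMul.star_mul, star_star]
  have hV1 : V * star V = 1 := by
    rw [hV, hsV, mul_assoc, ← mul_assoc Uy, hy1, one_mul, hx2]
  have hV2 : star V * V = 1 := by
    rw [hV, hsV, mul_assoc, ← mul_assoc Ux, hx1, one_mul, hy2]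
  -- row and column sums of normSq
  have hrow0 : ∀ i, ∑ j, Complex.normSq (V i j) = 1 := by
    intro i
    have h := congrFun (congrFun hV1 i) i
    simp only [Matrix.mul_apply, Matrix.one_apply_eq, Matrix.star_apply] at h
    have : (↑(∑ j, Complex.normSq (V i j)) : ℂ) = ((1:ℝ) : ℂ) := by
      push_cast
      rw [← h]
      exact Finset.sum_congr rfl fun j _ => (Complex.mul_conj (V i j)).symm
    exact_mod_cast this
  have hcol0 : ∀ j, ∑ i, Complex.normSq (V i j) = 1 := by
    intro j
    have h := congrFun (congrFun hV2 j) j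
    simp only [Matrix.mul_apply, Matrix.one_apply_eq, Matrix.star_apply] at h
    have : (↑(∑ i, Complex.normSq (V i j)) : ℂ) = ((1:ℝ) : ℂ) := by
      push_cast
      rw [← h]
      exact Finset.sum_congr rfl fun i _ => by
        rw [mul_comm]
        exact (Complex.mul_conj (V i j)).symm
    exact_mod_cast this
  -- trace identity
  have hW : star Ux * Y * Ux
      = V * diagonal (RCLike.ofReal ∘ hY.eigenvalues) * star V := by
    rw [hV, hsV]
    conv_lhs => rw [hY.spectral_theorem]
    simp only [Matrix.mul_assoc, Unitary.conjStarAlgAut_apply, ← hUy]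
  have htr : (X * Y).trace
      = ((∑ i, ∑ j, Complex.normSq (V i j) * (hX.eigenvalues i * hY.eigenvalues j) : ℝ) : ℂ) := by
    have h1 : (X * Y).trace
        = (diagonal (RCLike.ofReal ∘ hX.eigenvalues) *
            (V * diagonal (RCLike.ofReal ∘ hY.eigenvalues) * star V)).trace := by
      conv_lhs => rw [hX.spectral_theorem]
      rw [← hW]
      calc (Ux * diagonal (RCLike.ofReal ∘ hX.eigenvalues) * star Ux * Y).trace
          = (Ux * (diagonal (RCLike.ofReal ∘ hX.eigenvalues) * (star Ux * Y))).trace := by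
            simp only [Matrix.mul_assoc]
        _ = ((diagonal (RCLike.ofReal ∘ hX.eigenvalues) * (star Ux * Y)) * Ux).trace :=
            Matrix.trace_mul_comm _ _
        _ = (diagonal (RCLike.ofReal ∘ hX.eigenvalues) * (star Ux * Y * Ux)).trace := by
            simp only [Matrix.mul_assoc]
    rw [h1]
    have e1 : (diagonal (RCLike.ofReal ∘ hX.eigenvalues) *
          (V * diagonal (RCLike.ofReal ∘ hY.eigenvalues) * star V)).trace
        = ∑ i, (RCLike.ofReal (hX.eigenvalues i) : ℂ) *
            ((V * diagonal (RCLike.ofReal ∘ hY.eigenvalues) * star V : Matrix (Fin n) (Fin n) ℂ) i i) := by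
      simp [Matrix.trace, Matrix.diag, Matrix.diagonal_mul]
    have e2 : ∀ i, ((V * diagonal (RCLike.ofReal ∘ hY.eigenvalues) * star V : Matrix (Fin n) (Fin n) ℂ) i i)
        = ∑ j, V i j * (RCLike.ofReal (hY.eigenvalues j) : ℂ) * star (V i j) := by
      intro i
      rw [Matrix.mul_apply]
      refine Finset.sum_congr rfl fun j _ => ?_
      rw [Matrix.mul_diagonal, Matrix.star_apply, Function.comp_apply]
    rw [e1]
    simp only [rc_ofReal]
    push_cast
    refine Finset.sum_congr rfl fun i _ => ?_
    rw [e2 i, Finset.mul_sum]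
    simp only [rc_ofReal]
    refine Finset.sum_congr rfl fun j _ => ?_
    rw [show (Complex.ofReal (hX.eigenvalues i)) *
          (V i j * Complex.ofReal (hY.eigenvalues j) * star (V i j))
        = (V i j * star (V i j)) *
            (Complex.ofReal (hX.eigenvalues i) * Complex.ofReal (hY.eigenvalues j))
        from by ring,
      show star (V i j) = (starRingEnd ℂ) (V i j) from rfl, Complex.mul_conj]
  rw [htr]
  have key : (∑ i, μX i * μY i.rev : ℝ)
      ≤ ∑ i, ∑ j, Complex.normSq (V i j) * (hX.eigenvalues i * hY.eigenvalues j) := by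
    set S : Fin n → Fin n → ℝ := fun i j => Complex.normSq (V (σ i) (τ j)) with hS
    have hre : ∑ i, ∑ j, Complex.normSq (V i j) * (hX.eigenvalues i * hY.eigenvalues j)
        = ∑ i, ∑ j, S i j * (μX i * μY j) := by
      rw [← Equiv.sum_comp σ
        (fun i => ∑ j, Complex.normSq (V i j) * (hX.eigenvalues i * hY.eigenvalues j))]
      refine Finset.sum_congr rfl fun i _ => ?_
      rw [← Equiv.sum_comp τ
        (fun j => Complex.normSq (V (σ i) j) * (hX.eigenvalues (σ i) * hY.eigenvalues j))]
      refine Finset.sum_congr rfl fun j _ => ?_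
      rw [hσ, hτ]
      simp [hS]
    rw [hre]
    refine ds_key S (fun i j => Complex.normSq_nonneg _) ?_ ?_ μX μY hμX hμY
    · intro i
      rw [show ∑ j, S i j = ∑ j, Complex.normSq (V (σ i) (τ j)) from rfl,
        Equiv.sum_comp τ (fun j => Complex.normSq (V (σ i) j))]
      exact hrow0 (σ i)
    · intro j
      rw [show ∑ i, S i j = ∑ i, Complex.normSq (V (σ i) (τ j)) from rfl,
        Equiv.sum_comp σ (fun i => Complex.normSq (V i (τ j)))]
      exact hcol0 (τ j)
  exact_mod_cast key
end

section
/- For n×n Hermitian matrices X (arbitrary) and Y positive definite, Tr(X Y⁻¹) ≥ Σ_{i=1}^n λ_X(i)/λ_Y(i), where eigenvalues of both X and Y are listed in increasing order. -/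
open Matrix ComplexOrder

open Finset in

lemma key1 {n : ℕ} (a t : Fin n → ℝ) (ha : Monotone a) (k : Fin n)
    (ht0 : ∀ j, 0 ≤ t j) (ht1 : ∀ j, t j ≤ 1)
    (hsum : ∑ j, t j = ∑ j, (if j ≤ k then (1:ℝ) else 0)) :
    ∑ j, (if j ≤ k then a j else 0) ≤ ∑ j, t j * a j := by
  have h0 : (0:ℝ) ≤ ∑ j, (t j - if j ≤ k then (1:ℝ) else 0) * (a j - a k) := by
    apply Finset.sum_nonneg
    intro j _
    by_cases h : j ≤ k
    · simp only [if_pos h]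
      have h1 := ht1 j
      have h2 := ha h
      nlinarith
    · simp only [if_neg h]
      have h1 := ht0 j
      have h2 := ha (le_of_not_ge h)
      nlinarith
  have hexp : ∑ j, (t j - if j ≤ k then (1:ℝ) else 0) * (a j - a k)
      = (∑ j, t j * a j) - (∑ j, (if j ≤ k then a j else 0))
        - ((∑ j, t j) - ∑ j, (if j ≤ k then (1:ℝ) else 0)) * a k := by
    rw [sub_mul, Finset.sum_mul, Finset.sum_mul]
    rw [← Finset.sum_sub_distrib, ← Finset.sum_sub_distrib, ← Finset.sum_sub_distrib]
    apply Finset.sum_congr rfl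
    intro j _
    by_cases h : j ≤ k <;> simp [h] <;> ring
  rw [hexp, hsum] at h0
  linarith

lemma key2 {n : ℕ} (R : Fin n → Fin n → ℝ) (hR0 : ∀ i j, 0 ≤ R i j)
    (hrow : ∀ i, ∑ j, R i j = 1) (hcol : ∀ j, ∑ i, R i j = 1)
    (a c : Fin n → ℝ) (ha : Monotone a) (hc : Antitone c) (hcpos : ∀ i, 0 < c i) :
    ∑ i, c i * a i ≤ ∑ i, ∑ j, R i j * (c i * a j) := by
  classical
  set C : ℕ → ℝ := fun m => if h : m < n then c ⟨m, h⟩ else 0 with hC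
  set δ : ℕ → ℝ := fun m => C m - C (m + 1) with hδ
  have hδ0 : ∀ m, 0 ≤ δ m := by
    intro m
    simp only [hδ, hC]
    by_cases h1 : m < n
    · by_cases h2 : m + 1 < n
      · simp only [dif_pos h1, dif_pos h2, sub_nonneg]
        exact hc (by simp [Fin.le_def])
      · simp only [dif_pos h1, dif_neg h2, sub_zero]
        exact (hcpos _).le
    · have h2 : ¬ (m + 1 < n) := by omega
      simp [dif_neg h1, dif_neg h2]
  have htel : ∀ i : Fin n, c i = ∑ m ∈ Finset.range n, (if i.val ≤ m then δ m else 0) := by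
    intro i
    have h1 : ∑ m ∈ Finset.range n, (if i.val ≤ m then δ m else 0)
        = ∑ m ∈ Finset.Ico i.val n, δ m := by
      rw [Finset.sum_ite, Finset.sum_const_zero, add_zero]
      apply Finset.sum_congr _ (fun _ _ => rfl)
      ext m
      simp [Finset.mem_filter, Finset.mem_range, Finset.mem_Ico, and_comm]
    rw [h1]
    rw [Finset.sum_Ico_eq_sub _ i.isLt.le]
    simp only [hδ]
    rw [Finset.sum_range_sub' C, Finset.sum_range_sub' C]
    have e1 : C n = 0 := by simp [hC]
    have e2 : C i.val = c i := by simp [hC, i.isLt]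
    rw [e1, e2]; ring
  have lhs_eq : ∑ i, c i * a i
      = ∑ m ∈ Finset.range n, δ m * (∑ i : Fin n, (if i.val ≤ m then a i else 0)) := by
    calc ∑ i, c i * a i
        = ∑ i : Fin n, ∑ m ∈ Finset.range n, (if i.val ≤ m then δ m * a i else 0) := by
          refine Finset.sum_congr rfl fun i _ => ?_
          rw [htel i, Finset.sum_mul]
          refine Finset.sum_congr rfl fun m _ => ?_
          by_cases h : i.val ≤ m <;> simp [h]
      _ = ∑ m ∈ Finset.range n, ∑ i : Fin n, (if i.val ≤ m then δ m * a i else 0) :=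
          Finset.sum_comm
      _ = ∑ m ∈ Finset.range n, δ m * (∑ i : Fin n, (if i.val ≤ m then a i else 0)) := by
          refine Finset.sum_congr rfl fun m _ => ?_
          rw [Finset.mul_sum]
          refine Finset.sum_congr rfl fun i _ => ?_
          by_cases h : i.val ≤ m <;> simp [h]
  have rhs_eq : ∑ i, ∑ j, R i j * (c i * a j)
      = ∑ m ∈ Finset.range n, δ m *
          (∑ j : Fin n, (∑ i : Fin n, (if i.val ≤ m then R i j else 0)) * a j) := by
    calc ∑ i, ∑ j, R i j * (c i * a j)
        = ∑ i : Fin n, ∑ j : Fin n, ∑ m ∈ Finset.range n,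
            (if i.val ≤ m then δ m * (R i j * a j) else 0) := by
          refine Finset.sum_congr rfl fun i _ => Finset.sum_congr rfl fun j _ => ?_
          rw [htel i, Finset.sum_mul, Finset.mul_sum]
          refine Finset.sum_congr rfl fun m _ => ?_
          by_cases h : i.val ≤ m <;> simp [h] <;> ring
      _ = ∑ i : Fin n, ∑ m ∈ Finset.range n, ∑ j : Fin n,
            (if i.val ≤ m then δ m * (R i j * a j) else 0) := by
          refine Finset.sum_congr rfl fun i _ => Finset.sum_comm
      _ = ∑ m ∈ Finset.range n, ∑ i : Fin n, ∑ j : Fin n,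
            (if i.val ≤ m then δ m * (R i j * a j) else 0) := Finset.sum_comm
      _ = ∑ m ∈ Finset.range n, δ m *
            (∑ j : Fin n, (∑ i : Fin n, (if i.val ≤ m then R i j else 0)) * a j) := by
          refine Finset.sum_congr rfl fun m _ => ?_
          rw [Finset.sum_comm, Finset.mul_sum]
          refine Finset.sum_congr rfl fun j _ => ?_
          rw [Finset.sum_mul, Finset.mul_sum]
          refine Finset.sum_congr rfl fun i _ => ?_
          by_cases h : i.val ≤ m <;> simp [h] <;> ring
  rw [lhs_eq, rhs_eq]
  apply Finset.sum_le_sum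
  intro m hm
  apply mul_le_mul_of_nonneg_left _ (hδ0 m)
  have hmn : m < n := Finset.mem_range.mp hm
  set k : Fin n := ⟨m, hmn⟩ with hk
  have hle : ∀ i : Fin n, (i.val ≤ m) ↔ (i ≤ k) := by
    intro i; simp [Fin.le_def, hk]
  have := key1 a (fun j => ∑ i : Fin n, (if i.val ≤ m then R i j else 0)) ha k
    (fun j => Finset.sum_nonneg fun i _ => by by_cases h : i.val ≤ m <;> simp [h, hR0 i j])
    (fun j => by
      calc ∑ i : Fin n, (if i.val ≤ m then R i j else 0) ≤ ∑ i : Fin n, R i j := by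
            apply Finset.sum_le_sum
            intro i _
            by_cases h : i.val ≤ m <;> simp [h, hR0 i j]
        _ = 1 := hcol j)
    (by
      rw [Finset.sum_comm]
      refine Finset.sum_congr rfl fun i _ => ?_
      by_cases h : i.val ≤ m
      · simp [h, (hle i).mp h, hrow i]
      · have h' : ¬ i ≤ k := fun hh => h ((hle i).mpr hh)
        simp [h, h'])
  calc ∑ i : Fin n, (if i.val ≤ m then a i else 0)
      = ∑ j : Fin n, (if j ≤ k then a j else 0) :=
        Finset.sum_congr rfl fun i _ => if_congr (hle i) rfl rfl
    _ ≤ ∑ j : Fin n, (∑ i : Fin n, (if i.val ≤ m then R i j else 0)) * a j := this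


lemma inv_spectral {n : ℕ} (Y : Matrix (Fin n) (Fin n) ℂ) (hY : Y.PosDef) :
    Y⁻¹ = (hY.isHermitian.eigenvectorUnitary : Matrix (Fin n) (Fin n) ℂ) *
      diagonal (RCLike.ofReal ∘ fun i => (hY.isHermitian.eigenvalues i)⁻¹) *
      star (hY.isHermitian.eigenvectorUnitary : Matrix (Fin n) (Fin n) ℂ) := by
  set U := (hY.isHermitian.eigenvectorUnitary : Matrix (Fin n) (Fin n) ℂ) with hU
  set e := hY.isHermitian.eigenvalues with he
  have hUU : U * star U = 1 := (Matrix.mem_unitaryGroup_iff).mp (hY.isHermitian.eigenvectorUnitary).2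
  have hUU' : star U * U = 1 := (Matrix.mem_unitaryGroup_iff').mp (hY.isHermitian.eigenvectorUnitary).2
  have hY' : Y = U * diagonal (RCLike.ofReal ∘ e) * star U := hY.isHermitian.spectral_theorem
  apply Matrix.inv_eq_right_inv
  rw [hY']
  have h1 : (diagonal (RCLike.ofReal ∘ e) : Matrix (Fin n) (Fin n) ℂ) *
      diagonal (RCLike.ofReal ∘ fun i => (e i)⁻¹) = 1 := by
    rw [diagonal_mul_diagonal]
    have hfun : (fun i => ((RCLike.ofReal ∘ e : Fin n → ℂ)) i *
        ((RCLike.ofReal ∘ fun i => (e i)⁻¹ : Fin n → ℂ)) i) = fun _ => (1:ℂ) := by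
      funext i
      have h0 : (e i : ℂ) ≠ 0 := Complex.ofReal_ne_zero.mpr (hY.eigenvalues_pos i).ne'
      simp only [Function.comp_apply, RCLike.ofReal_inv]
      exact mul_inv_cancel₀ h0
    rw [hfun, Matrix.diagonal_one]
  simp only [mul_assoc]
  rw [← mul_assoc (star U) U, hUU', one_mul, ← mul_assoc (diagonal (RCLike.ofReal ∘ e)), h1,
    one_mul, hUU]

lemma trace_form {n : ℕ} (X Y : Matrix (Fin n) (Fin n) ℂ) (hX : X.IsHermitian) (hY : Y.PosDef) :
    ∃ P : Fin n → Fin n → ℝ, (∀ i j, 0 ≤ P i j) ∧ (∀ i, ∑ j, P i j = 1) ∧ (∀ j, ∑ i, P i j = 1) ∧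
      (X * Y⁻¹).trace = ((∑ i, ∑ j, P i j *
        (hX.eigenvalues j * (hY.isHermitian.eigenvalues i)⁻¹) : ℝ) : ℂ) := by
  set U := (hY.isHermitian.eigenvectorUnitary : Matrix (Fin n) (Fin n) ℂ) with hU
  set V := (hX.eigenvectorUnitary : Matrix (Fin n) (Fin n) ℂ) with hV
  set eX := hX.eigenvalues with heX
  set eY := hY.isHermitian.eigenvalues with heY
  set W := star U * V with hW
  have hUU : U * star U = 1 := (Matrix.mem_unitaryGroup_iff).mp hY.isHermitian.eigenvectorUnitary.2
  have hUU' : star U * U = 1 := (Matrix.mem_unitaryGroup_iff').mp hY.isHermitian.eigenvectorUnitary.2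
  have hVV : V * star V = 1 := (Matrix.mem_unitaryGroup_iff).mp hX.eigenvectorUnitary.2
  have hVV' : star V * V = 1 := (Matrix.mem_unitaryGroup_iff').mp hX.eigenvectorUnitary.2
  have hsW : star W = star V * U := by rw [hW, StarMul.star_mul, star_star]
  have hWW : W * star W = 1 := by
    rw [hsW, hW]
    simp only [mul_assoc]
    rw [← mul_assoc V, hVV, one_mul, hUU']
  have hWW' : star W * W = 1 := by
    rw [hsW, hW]
    simp only [mul_assoc]
    rw [← mul_assoc U, hUU, one_mul, hVV']
  have hterm : ∀ i j, W i j * star (W i j) = ((Complex.normSq (W i j) : ℝ) : ℂ) := by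
    intro i j
    rw [RCLike.star_def]
    exact Complex.mul_conj (W i j)
  refine ⟨fun i j => Complex.normSq (W i j), fun i j => Complex.normSq_nonneg _, ?_, ?_, ?_⟩
  · intro i
    have h1 : ((W * star W) i i) = 1 := by rw [hWW]; simp [Matrix.one_apply]
    rw [Matrix.mul_apply] at h1
    have h2 : ∀ j ∈ Finset.univ, W i j * (star W) j i = ((Complex.normSq (W i j) : ℝ) : ℂ) := by
      intro j _
      rw [Matrix.star_apply]
      exact hterm i j
    rw [Finset.sum_congr rfl h2, ← Complex.ofReal_sum] at h1
    exact_mod_cast h1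
  · intro j
    have h1 : ((star W * W) j j) = 1 := by rw [hWW']; simp [Matrix.one_apply]
    rw [Matrix.mul_apply] at h1
    have h2 : ∀ i ∈ Finset.univ, (star W) j i * W i j = ((Complex.normSq (W i j) : ℝ) : ℂ) := by
      intro i _
      rw [Matrix.star_apply, mul_comm]
      exact hterm i j
    rw [Finset.sum_congr rfl h2, ← Complex.ofReal_sum] at h1
    exact_mod_cast h1
  · have hX' : X = V * diagonal (RCLike.ofReal ∘ eX) * star V := hX.spectral_theorem
    have hYinv : Y⁻¹ = U * diagonal (RCLike.ofReal ∘ fun i => (eY i)⁻¹) * star U :=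
      inv_spectral Y hY
    rw [hX', hYinv]
    have e1 : V * diagonal (RCLike.ofReal ∘ eX) * star V *
        (U * diagonal (RCLike.ofReal ∘ fun i => (eY i)⁻¹) * star U) =
        (V * diagonal (RCLike.ofReal ∘ eX) * star V *
          (U * diagonal (RCLike.ofReal ∘ fun i => (eY i)⁻¹))) * star U := by
      simp only [mul_assoc]
    rw [e1, Matrix.trace_mul_comm]
    have e2 : star U * (V * diagonal (RCLike.ofReal ∘ eX) * star V *
        (U * diagonal (RCLike.ofReal ∘ fun i => (eY i)⁻¹))) =
        W * diagonal (RCLike.ofReal ∘ eX) * star W *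
          diagonal (RCLike.ofReal ∘ fun i => (eY i)⁻¹) := by
      rw [hsW, hW]
      simp only [mul_assoc]
    rw [e2]
    simp only [Matrix.trace, Matrix.diag]
    rw [Complex.ofReal_sum]
    apply Finset.sum_congr rfl
    intro i _
    rw [Matrix.mul_diagonal, Matrix.mul_apply, Finset.sum_mul, Complex.ofReal_sum]
    apply Finset.sum_congr rfl
    intro j _
    rw [Matrix.mul_diagonal, Matrix.star_apply]
    have := hterm i j
    have hreal : ∀ x : ℝ, (RCLike.ofReal x : ℂ) = Complex.ofReal x := fun _ => rfl
    simp only [Function.comp_apply, hreal]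
    push_cast
    rw [RCLike.star_def] at this ⊢
    push_cast at this
    linear_combination ((eX j : ℂ) * ((eY i : ℂ))⁻¹) * this


theorem trace_mul_inv_ge_ordered_eigenvalue_ratio
    {n : ℕ} (X Y : Matrix (Fin n) (Fin n) ℂ)
    (hX : X.IsHermitian) (hY : Y.PosDef)
    (μX μY : Fin n → ℝ) (hμX : Monotone μX) (hμY : Monotone μY)
    (hpermX : ∃ σ : Equiv.Perm (Fin n), μX = hX.eigenvalues ∘ σ)
    (hpermY : ∃ σ : Equiv.Perm (Fin n), μY = hY.isHermitian.eigenvalues ∘ σ) :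
    ((∑ i, μX i / μY i : ℝ) : ℂ) ≤ (X * Y⁻¹).trace := by
  obtain ⟨P, hP0, hProw, hPcol, htr⟩ := trace_form X Y hX hY
  obtain ⟨σX, hσX⟩ := hpermX
  obtain ⟨σY, hσY⟩ := hpermY
  rw [htr, Complex.real_le_real]
  have hμXeq : ∀ j, μX j = hX.eigenvalues (σX j) := fun j => by rw [hσX]; rfl
  have hμYeq : ∀ i, μY i = hY.isHermitian.eigenvalues (σY i) := fun i => by rw [hσY]; rfl
  have hμYpos : ∀ i, 0 < μY i := fun i => by rw [hμYeq i]; exact hY.eigenvalues_pos _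
  have hreindex : ∑ i, ∑ j, P i j * (hX.eigenvalues j * (hY.isHermitian.eigenvalues i)⁻¹)
      = ∑ i, ∑ j, P (σY i) (σX j) * (μX j * (μY i)⁻¹) := by
    rw [← Equiv.sum_comp σY
      (fun i => ∑ j, P i j * (hX.eigenvalues j * (hY.isHermitian.eigenvalues i)⁻¹))]
    refine Finset.sum_congr rfl fun i _ => ?_
    rw [← Equiv.sum_comp σX
      (fun j => P (σY i) j * (hX.eigenvalues j * (hY.isHermitian.eigenvalues (σY i))⁻¹))]
    refine Finset.sum_congr rfl fun j _ => ?_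
    rw [hμXeq j, hμYeq i]
  rw [hreindex]
  have hrow' : ∀ i, ∑ j, P (σY i) (σX j) = 1 := by
    intro i
    rw [Equiv.sum_comp σX (fun j => P (σY i) j)]
    exact hProw (σY i)
  have hcol' : ∀ j, ∑ i, P (σY i) (σX j) = 1 := by
    intro j
    rw [Equiv.sum_comp σY (fun i => P i (σX j))]
    exact hPcol (σX j)
  have hanti : Antitone (fun i => (μY i)⁻¹) := by
    intro i j hij
    exact inv_anti₀ (hμYpos i) (hμY hij)
  have h := key2 (fun i j => P (σY i) (σX j)) (fun i j => hP0 _ _) hrow' hcol'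
    μX (fun i => (μY i)⁻¹) hμX hanti (fun i => inv_pos.mpr (hμYpos i))
  calc ∑ i, μX i / μY i = ∑ i, (μY i)⁻¹ * μX i := by
        refine Finset.sum_congr rfl fun i _ => ?_
        rw [div_eq_inv_mul]
    _ ≤ ∑ i, ∑ j, P (σY i) (σX j) * ((μY i)⁻¹ * μX j) := h
    _ = ∑ i, ∑ j, P (σY i) (σX j) * (μX j * (μY i)⁻¹) := by
        refine Finset.sum_congr rfl fun i _ => Finset.sum_congr rfl fun j _ => ?_
        ring
end

section
/- For Hermitian positive definite n×n matrices A and B, Tr{A B⁻¹(B+I)⁻¹ + B A⁻¹(A+I)⁻¹ − (A+I)⁻¹ − (B+I)⁻¹} ≥ Σ_{i=1}^n (λ_A(i)−λ_B(i))²(1+λ_A(i)+λ_B(i)) / [λ_A(i)λ_B(i)(1+λ_A(i))(1+λ_B(i))] ≥ 0, where eigenvalues are listed in increasing order. -/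
open Finset

lemma abel_swap (n : ℕ) (c d : ℕ → ℝ) :
    ∑ i ∈ range n, (c i * ∑ m ∈ range i, d m)
      = ∑ m ∈ range n, (d m * ∑ i ∈ range n, if m < i then c i else 0) := by
  have h1 : ∀ i ∈ range n, (c i * ∑ m ∈ range i, d m)
      = ∑ m ∈ range n, (if m < i then c i * d m else 0) := by
    intro i hi
    have : range i = (range n).filter (fun m => m < i) := by
      ext m
      simp only [mem_range, mem_filter]
      rw [mem_range] at hi
      omega
    rw [Finset.mul_sum, this, Finset.sum_filter]
  rw [Finset.sum_congr rfl h1, Finset.sum_comm]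
  apply Finset.sum_congr rfl
  intro m _
  rw [Finset.mul_sum]
  apply Finset.sum_congr rfl
  intro i _
  by_cases h : m < i <;> simp [h, mul_comm]

lemma key_nat (n : ℕ) (p : ℕ → ℕ → ℝ) (x y : ℕ → ℝ)
    (hp : ∀ i j, 0 ≤ p i j)
    (hrow : ∀ i ∈ range n, ∑ j ∈ range n, p i j = 1)
    (hcol : ∀ j ∈ range n, ∑ i ∈ range n, p i j = 1)
    (hx : Monotone x) (hy : Antitone y) :
    ∑ i ∈ range n, x i * y i ≤ ∑ i ∈ range n, ∑ j ∈ range n, p i j * (x i * y j) := by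
  -- rewrite both sides via telescoping of x
  have hxi : ∀ i, x i = x 0 + ∑ m ∈ range i, (x (m + 1) - x m) := by
    intro i; rw [Finset.sum_range_sub]; ring
  set d : ℕ → ℝ := fun m => x (m + 1) - x m with hd
  have hdnn : ∀ m, 0 ≤ d m := fun m => sub_nonneg.2 (hx (Nat.le_succ m))
  set c : ℕ → ℝ := fun i => ∑ j ∈ range n, p i j * y j with hc
  have hL : ∑ i ∈ range n, x i * y i
      = x 0 * ∑ i ∈ range n, y i
        + ∑ m ∈ range n, (d m * ∑ i ∈ range n, if m < i then y i else 0) := by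
    rw [← abel_swap n y d, Finset.mul_sum, ← Finset.sum_add_distrib]
    apply Finset.sum_congr rfl
    intro i _
    rw [hxi i]
    ring
  have hR : ∑ i ∈ range n, ∑ j ∈ range n, p i j * (x i * y j)
      = x 0 * ∑ i ∈ range n, y i
        + ∑ m ∈ range n, (d m * ∑ i ∈ range n, if m < i then c i else 0) := by
    have h2 : ∀ i ∈ range n, ∑ j ∈ range n, p i j * (x i * y j) = x i * c i := by
      intro i _
      rw [hc, Finset.mul_sum]
      apply Finset.sum_congr rfl
      intro j _
      ring
    have h3 : x 0 * ∑ i ∈ range n, y i = ∑ i ∈ range n, x 0 * c i := by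
      have : ∑ i ∈ range n, y i = ∑ i ∈ range n, c i := by
        rw [hc]
        rw [Finset.sum_comm]
        apply Finset.sum_congr rfl
        intro j hj
        rw [← Finset.sum_mul, hcol j hj, one_mul]
      rw [this, Finset.mul_sum]
    rw [Finset.sum_congr rfl h2, ← abel_swap n c d, h3, ← Finset.sum_add_distrib]
    apply Finset.sum_congr rfl
    intro i _
    rw [hxi i]
    ring
  rw [hL, hR]
  apply add_le_add_right
  apply Finset.sum_le_sum
  intro m _
  apply mul_le_mul_of_nonneg_left _ (hdnn m)
  -- key inner inequality
  set r : ℕ → ℝ := fun j => ∑ i ∈ range n, if m < i then p i j else 0 with hr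
  have hcm : ∑ i ∈ range n, (if m < i then c i else 0) = ∑ j ∈ range n, r j * y j := by
    have : ∀ i ∈ range n, (if m < i then c i else 0)
        = ∑ j ∈ range n, (if m < i then p i j else 0) * y j := by
      intro i _
      by_cases h : m < i <;> simp [h, hc]
    rw [Finset.sum_congr rfl this, Finset.sum_comm]
    apply Finset.sum_congr rfl
    intro j _
    rw [Finset.sum_mul]
  rw [hcm]
  have hr0 : ∀ j, 0 ≤ r j := by
    intro j
    apply Finset.sum_nonneg
    intro i _
    by_cases h : m < i <;> simp [h, hp i j]
  have hr1 : ∀ j ∈ range n, r j ≤ 1 := by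
    intro j hj
    rw [hr, ← hcol j hj]
    apply Finset.sum_le_sum
    intro i _
    by_cases h : m < i <;> simp [h, hp i j]
  have hrsum : ∑ j ∈ range n, r j = ∑ j ∈ range n, (if m < j then (1:ℝ) else 0) := by
    rw [hr, Finset.sum_comm]
    apply Finset.sum_congr rfl
    intro i hi
    by_cases h : m < i <;> simp [h, hrow i hi]
  -- pointwise estimate with c := y (m+1)
  have key : ∀ j ∈ range n,
      (if m < j then y j else 0) + (r j - if m < j then 1 else 0) * y (m + 1) ≤ r j * y j := by
    intro j _
    by_cases h : m < j
    · simp only [h, if_pos]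
      nlinarith [hy (show m + 1 ≤ j from h), hr1 j ‹j ∈ range n›]
    · simp only [h, if_neg, not_false_iff]
      push_neg at h
      nlinarith [hy (show j ≤ m + 1 by omega), hr0 j]
  calc ∑ i ∈ range n, (if m < i then y i else 0)
      = ∑ j ∈ range n, ((if m < j then y j else 0)
          + (r j - if m < j then 1 else 0) * y (m + 1)) := by
        have h4 : ∑ j ∈ range n, (r j - if m < j then (1:ℝ) else 0) * y (m+1) = 0 := by
          rw [← Finset.sum_mul]
          have h5 : ∑ j ∈ range n, (r j - if m < j then (1:ℝ) else 0) = 0 := by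
            rw [Finset.sum_sub_distrib, hrsum, sub_self]
          rw [h5, zero_mul]
        rw [Finset.sum_add_distrib, h4, add_zero]
    _ ≤ ∑ j ∈ range n, r j * y j := Finset.sum_le_sum key
lemma key_fin {n : ℕ} (p : Fin n → Fin n → ℝ) (x y : Fin n → ℝ)
    (hp : ∀ i j, 0 ≤ p i j) (hrow : ∀ i, ∑ j, p i j = 1) (hcol : ∀ j, ∑ i, p i j = 1)
    (hx : Monotone x) (hy : Antitone y) :
    ∑ i, x i * y i ≤ ∑ i, ∑ j, p i j * (x i * y j) := by
  rcases Nat.eq_zero_or_pos n with hn | hn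
  · subst hn; simp
  obtain ⟨m, rfl⟩ : ∃ m, n = m + 1 := ⟨n - 1, by omega⟩
  set x' : ℕ → ℝ := fun k => x ⟨min k m, by omega⟩ with hx'
  set y' : ℕ → ℝ := fun k => y ⟨min k m, by omega⟩ with hy'
  set p' : ℕ → ℕ → ℝ := fun k l =>
    if hk : k < m + 1 then if hl : l < m + 1 then p ⟨k, hk⟩ ⟨l, hl⟩ else 0 else 0 with hp'
  have ex : ∀ (k : ℕ) (hk : k < m + 1), x' k = x ⟨k, hk⟩ := by
    intro k hk; simp only [hx']; congr 1; apply Fin.ext; simp; omega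
  have ey : ∀ (k : ℕ) (hk : k < m + 1), y' k = y ⟨k, hk⟩ := by
    intro k hk; simp only [hy']; congr 1; apply Fin.ext; simp; omega
  have ep : ∀ (k l : ℕ) (hk : k < m + 1) (hl : l < m + 1), p' k l = p ⟨k, hk⟩ ⟨l, hl⟩ := by
    intro k l hk hl; simp only [hp', dif_pos hk, dif_pos hl]
  have sfin : ∀ f : Fin (m+1) → ℝ, ∀ g : ℕ → ℝ,
      (∀ (k : ℕ) (hk : k < m + 1), g k = f ⟨k, hk⟩) →
      ∑ i, f i = ∑ k ∈ Finset.range (m+1), g k := by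
    intro f g hg
    rw [← Fin.sum_univ_eq_sum_range g (m+1)]
    apply Finset.sum_congr rfl
    intro i _
    rw [hg i.1 i.2]
  have hL : ∑ i, x i * y i = ∑ k ∈ Finset.range (m+1), x' k * y' k := by
    apply sfin
    intro k hk; rw [ex k hk, ey k hk]
  have hR : ∑ i, ∑ j, p i j * (x i * y j)
      = ∑ k ∈ Finset.range (m+1), ∑ l ∈ Finset.range (m+1), p' k l * (x' k * y' l) := by
    apply sfin
    intro k hk
    exact (sfin _ _ (fun l hl => by rw [ep k l hk hl, ex k hk, ey l hl])).symm
  rw [hL, hR]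
  apply key_nat
  · intro i j
    simp only [hp']
    split
    · split
      · apply hp
      · exact le_refl 0
    · exact le_refl 0
  · intro i hi
    rw [Finset.mem_range] at hi
    rw [← sfin (fun j => p ⟨i, hi⟩ j) (fun l => p' i l) (fun l hl => ep i l hi hl)]
    exact hrow _
  · intro j hj
    rw [Finset.mem_range] at hj
    rw [← sfin (fun i => p i ⟨j, hj⟩) (fun k => p' k j) (fun k hk => ep k j hk hj)]
    exact hcol _
  · intro a b hab
    simp only [hx']
    apply hx
    simp only [Fin.le_def]
    omega
  · intro a b hab
    simp only [hy']
    apply hy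
    simp only [Fin.le_def]
    omega
open Matrix in
lemma conj_mul_conj {n : ℕ} (U : Matrix (Fin n) (Fin n) ℂ)
    (hU : star U * U = 1) (d e : Fin n → ℂ) :
    (U * diagonal d * star U) * (U * diagonal e * star U)
      = U * diagonal (d * e) * star U := by
  have h : (U * diagonal d * star U) * (U * diagonal e * star U)
      = U * (diagonal d * ((star U * U) * (diagonal e * star U))) := by
    simp only [Matrix.mul_assoc]
  rw [h, hU, one_mul, show U * (diagonal d * (diagonal e * star U))
    = U * (diagonal d * diagonal e) * star U by simp only [Matrix.mul_assoc],
    Matrix.diagonal_mul_diagonal]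
  rfl

open Matrix in
lemma conj_inv' {n : ℕ} (U : Matrix (Fin n) (Fin n) ℂ)
    (hU : star U * U = 1) (hU' : U * star U = 1) (d : Fin n → ℂ) (hd : ∀ i, d i ≠ 0) :
    (U * diagonal d * star U)⁻¹ = U * diagonal d⁻¹ * star U := by
  apply Matrix.inv_eq_right_inv
  rw [conj_mul_conj U hU d d⁻¹]
  have : d * d⁻¹ = 1 := by
    funext i
    exact mul_inv_cancel₀ (hd i)
  rw [this, show Matrix.diagonal (1 : Fin n → ℂ) = (1 : Matrix (Fin n) (Fin n) ℂ) from
    Matrix.diagonal_one, mul_one, hU']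

open Matrix in
lemma conj_add_one {n : ℕ} (U : Matrix (Fin n) (Fin n) ℂ)
    (hU' : U * star U = 1) (d : Fin n → ℂ) :
    U * diagonal d * star U + 1 = U * diagonal (d + 1) * star U := by
  have h1 : (1 : Matrix (Fin n) (Fin n) ℂ) = U * 1 * star U := by rw [mul_one, hU']
  rw [show diagonal (d + 1) = diagonal d + 1 by
    rw [show d + 1 = (fun i => d i + 1) from rfl, ← Matrix.diagonal_add,
      show Matrix.diagonal (fun _ => (1:ℂ)) = (1 : Matrix (Fin n) (Fin n) ℂ) from
        Matrix.diagonal_one]]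
  rw [mul_add, add_mul, ← h1]

open Matrix in
lemma trace_conj {n : ℕ} (U M : Matrix (Fin n) (Fin n) ℂ)
    (hU : star U * U = 1) : (U * M * star U).trace = M.trace := by
  rw [Matrix.trace_mul_comm, ← Matrix.mul_assoc, hU, one_mul]

open Matrix in
lemma trace_conj_mul_conj {n : ℕ} (U V : Matrix (Fin n) (Fin n) ℂ)
    (hU : star U * U = 1) (hU' : U * star U = 1) (d e : Fin n → ℂ) :
    ((U * diagonal d * star U) * (V * diagonal e * star V)).trace
      = ∑ i, ∑ j, d i * e j * ((star U * V) i j * star ((star U * V) i j)) := by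
  set W := star U * V with hW
  have h1 : U * (diagonal d * W * (diagonal e * star W)) * star U
      = (U * diagonal d * star U) * (V * diagonal e * star V) := by
    rw [hW]
    simp only [Matrix.star_mul, star_star]
    simp only [Matrix.mul_assoc]
    rw [hU', mul_one]
  rw [← h1, trace_conj U _ hU]
  have h2 : ∀ i, (diagonal d * W * (diagonal e * star W)) i i
      = ∑ j, d i * e j * (W i j * star (W i j)) := by
    intro i
    rw [Matrix.mul_apply]
    apply Finset.sum_congr rfl
    intro j _
    rw [Matrix.diagonal_mul, Matrix.mul_apply]
    rw [Finset.sum_eq_single j]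
    · rw [Matrix.diagonal_apply_eq, Matrix.star_apply]
      ring
    · intro b _ hb
      rw [Matrix.diagonal_apply_ne _ hb.symm, zero_mul]
    · intro h
      exact absurd (Finset.mem_univ j) h
  simp only [Matrix.trace, Matrix.diag]
  exact Finset.sum_congr rfl fun i _ => h2 i
open Matrix ComplexOrder

theorem trace_lower_bound_eigenvalue_sum
    {n : ℕ} (A B : Matrix (Fin n) (Fin n) ℂ)
    (hA : A.PosDef) (hB : B.PosDef)
    (μA μB : Fin n → ℝ) (hμA : Monotone μA) (hμB : Monotone μB)
    (hpermA : ∃ σ : Equiv.Perm (Fin n), μA = hA.isHermitian.eigenvalues ∘ σ)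
    (hpermB : ∃ σ : Equiv.Perm (Fin n), μB = hB.isHermitian.eigenvalues ∘ σ) :
    ((∑ i, (μA i - μB i) ^ 2 * (1 + μA i + μB i)
        / (μA i * μB i * (1 + μA i) * (1 + μB i)) : ℝ) : ℂ)
      ≤ (A * B⁻¹ * (B + 1)⁻¹ + B * A⁻¹ * (A + 1)⁻¹ - (A + 1)⁻¹ - (B + 1)⁻¹).trace
    ∧ 0 ≤ (∑ i, (μA i - μB i) ^ 2 * (1 + μA i + μB i)
        / (μA i * μB i * (1 + μA i) * (1 + μB i)) : ℝ) := by
  obtain ⟨σ, hσ⟩ := hpermA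
  obtain ⟨τ, hτ⟩ := hpermB
  set a : Fin n → ℝ := hA.isHermitian.eigenvalues with ha_def
  set b : Fin n → ℝ := hB.isHermitian.eigenvalues with hb_def
  have hapos : ∀ i, 0 < a i := hA.eigenvalues_pos
  have hbpos : ∀ i, 0 < b i := hB.eigenvalues_pos
  have hμApos : ∀ i, 0 < μA i := fun i => by rw [hσ]; exact hapos (σ i)
  have hμBpos : ∀ i, 0 < μB i := fun i => by rw [hτ]; exact hbpos (τ i)
  have htgt_nonneg : ∀ i, 0 ≤ (μA i - μB i) ^ 2 * (1 + μA i + μB i)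
      / (μA i * μB i * (1 + μA i) * (1 + μB i)) := by
    intro i
    have h1 := hμApos i
    have h2 := hμBpos i
    positivity
  refine ⟨?_, Finset.sum_nonneg fun i _ => htgt_nonneg i⟩
  set U : Matrix (Fin n) (Fin n) ℂ :=
    (hA.isHermitian.eigenvectorUnitary : Matrix (Fin n) (Fin n) ℂ) with hU_def
  set V : Matrix (Fin n) (Fin n) ℂ :=
    (hB.isHermitian.eigenvectorUnitary : Matrix (Fin n) (Fin n) ℂ) with hV_def
  have hU1 : U * star U = 1 :=
    Matrix.mem_unitaryGroup_iff.mp (hA.isHermitian.eigenvectorUnitary).2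
  have hU2 : star U * U = 1 :=
    Matrix.mem_unitaryGroup_iff'.mp (hA.isHermitian.eigenvectorUnitary).2
  have hV1 : V * star V = 1 :=
    Matrix.mem_unitaryGroup_iff.mp (hB.isHermitian.eigenvectorUnitary).2
  have hV2 : star V * V = 1 :=
    Matrix.mem_unitaryGroup_iff'.mp (hB.isHermitian.eigenvectorUnitary).2
  set da : Fin n → ℂ := fun i => ((a i : ℝ) : ℂ) with hda_def
  set db : Fin n → ℂ := fun i => ((b i : ℝ) : ℂ) with hdb_def
  have hda0 : ∀ i, da i ≠ 0 := fun i => by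
    simp only [hda_def, ne_eq, Complex.ofReal_eq_zero]; exact (hapos i).ne'
  have hdb0 : ∀ i, db i ≠ 0 := fun i => by
    simp only [hdb_def, ne_eq, Complex.ofReal_eq_zero]; exact (hbpos i).ne'
  have hda1 : ∀ i, (da + 1) i ≠ 0 := fun i => by
    simp only [hda_def, Pi.add_apply, Pi.one_apply]
    intro h
    have h2 : ((a i + 1 : ℝ) : ℂ) = 0 := by push_cast; rw [← h]
    rw [Complex.ofReal_eq_zero] at h2
    linarith [hapos i]
  have hdb1 : ∀ i, (db + 1) i ≠ 0 := fun i => by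
    simp only [hdb_def, Pi.add_apply, Pi.one_apply]
    intro h
    have h2 : ((b i + 1 : ℝ) : ℂ) = 0 := by push_cast; rw [← h]
    rw [Complex.ofReal_eq_zero] at h2
    linarith [hbpos i]
  have hAeq : A = U * diagonal da * star U := hA.isHermitian.spectral_theorem
  have hBeq : B = V * diagonal db * star V := hB.isHermitian.spectral_theorem
  have hAinv : A⁻¹ = U * diagonal da⁻¹ * star U := by
    rw [hAeq]; exact conj_inv' U hU2 hU1 da hda0
  have hBinv : B⁻¹ = V * diagonal db⁻¹ * star V := by
    rw [hBeq]; exact conj_inv' V hV2 hV1 db hdb0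
  have hA1 : (A + 1)⁻¹ = U * diagonal (da + 1)⁻¹ * star U := by
    rw [hAeq, conj_add_one U hU1 da]; exact conj_inv' U hU2 hU1 _ hda1
  have hB1 : (B + 1)⁻¹ = V * diagonal (db + 1)⁻¹ * star V := by
    rw [hBeq, conj_add_one V hV1 db]; exact conj_inv' V hV2 hV1 _ hdb1
  set W : Matrix (Fin n) (Fin n) ℂ := star U * V with hW_def
  set p : Fin n → Fin n → ℝ := fun i j => Complex.normSq (W i j) with hp_def
  have hT1 : (A * B⁻¹ * (B + 1)⁻¹).trace
      = ((∑ i, ∑ j, (a i * ((b j)⁻¹ * (b j + 1)⁻¹)) * p i j : ℝ) : ℂ) := by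
    have h : B⁻¹ * (B + 1)⁻¹ = V * diagonal (db⁻¹ * (db + 1)⁻¹) * star V := by
      rw [hBinv, hB1]; exact conj_mul_conj V hV2 _ _
    rw [Matrix.mul_assoc, hAeq, h, trace_conj_mul_conj U V hU2 hU1 _ _]
    push_cast
    apply Finset.sum_congr rfl
    intro i _
    apply Finset.sum_congr rfl
    intro j _
    rw [show star ((star U * V) i j) = (starRingEnd ℂ) ((star U * V) i j) from rfl,
      Complex.mul_conj]
    simp only [hp_def, hda_def, hdb_def, Pi.mul_apply, Pi.inv_apply, Pi.add_apply, Pi.one_apply,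
      hW_def]
    all_goals push_cast; ring
  have hT2 : (B * A⁻¹ * (A + 1)⁻¹).trace
      = ((∑ i, ∑ j, (b i * ((a j)⁻¹ * (a j + 1)⁻¹)) * p j i : ℝ) : ℂ) := by
    have h : A⁻¹ * (A + 1)⁻¹ = U * diagonal (da⁻¹ * (da + 1)⁻¹) * star U := by
      rw [hAinv, hA1]; exact conj_mul_conj U hU2 _ _
    rw [Matrix.mul_assoc, hBeq, h, trace_conj_mul_conj V U hV2 hV1 _ _]
    push_cast
    apply Finset.sum_congr rfl
    intro i _
    apply Finset.sum_congr rfl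
    intro j _
    rw [show star ((star V * U) i j) = (starRingEnd ℂ) ((star V * U) i j) from rfl,
      Complex.mul_conj]
    have hq : (star V * U) i j = star (W j i) := by
      rw [← Matrix.star_apply, hW_def, Matrix.star_mul, star_star]
    rw [hq, show (star (W j i) : ℂ) = (starRingEnd ℂ) (W j i) from rfl, Complex.normSq_conj]
    simp only [hp_def, hda_def, hdb_def, Pi.mul_apply, Pi.inv_apply, Pi.add_apply, Pi.one_apply]
    all_goals push_cast; ring
  have hT3 : (A + 1)⁻¹.trace = ((∑ i, (a i + 1)⁻¹ : ℝ) : ℂ) := by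
    rw [hA1, trace_conj U _ hU2, Matrix.trace_diagonal]
    push_cast
    apply Finset.sum_congr rfl
    intro i _
    simp only [Pi.inv_apply, Pi.add_apply, Pi.one_apply, hda_def]
  have hT4 : (B + 1)⁻¹.trace = ((∑ i, (b i + 1)⁻¹ : ℝ) : ℂ) := by
    rw [hB1, trace_conj V _ hV2, Matrix.trace_diagonal]
    push_cast
    apply Finset.sum_congr rfl
    intro i _
    simp only [Pi.inv_apply, Pi.add_apply, Pi.one_apply, hdb_def]
  have hWW1 : W * star W = 1 := by
    rw [hW_def, Matrix.star_mul, star_star]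
    calc star U * V * (star V * U) = star U * (V * star V) * U := by
          simp only [Matrix.mul_assoc]
      _ = 1 := by rw [hV1, mul_one, hU2]
  have hWW2 : star W * W = 1 := by
    rw [hW_def, Matrix.star_mul, star_star]
    calc star V * U * (star U * V) = star V * (U * star U) * V := by
          simp only [Matrix.mul_assoc]
      _ = 1 := by rw [hU1, mul_one, hV2]
  have hterm : ∀ i j, W i j * (star W) j i = ((p i j : ℝ) : ℂ) := by
    intro i j
    rw [Matrix.star_apply, show (star (W i j) : ℂ) = (starRingEnd ℂ) (W i j) from rfl,
      Complex.mul_conj]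
  have hprow : ∀ i, ∑ j, p i j = 1 := by
    intro i
    have h : (W * star W) i i = (1 : Matrix (Fin n) (Fin n) ℂ) i i := by rw [hWW1]
    rw [Matrix.mul_apply, Matrix.one_apply_eq] at h
    rw [Finset.sum_congr rfl fun j _ => hterm i j] at h
    exact_mod_cast h
  have hpcol : ∀ j, ∑ i, p i j = 1 := by
    intro j
    have h : (star W * W) j j = (1 : Matrix (Fin n) (Fin n) ℂ) j j := by rw [hWW2]
    rw [Matrix.mul_apply, Matrix.one_apply_eq] at h
    have h2 : ∀ i, (star W) j i * W i j = ((p i j : ℝ) : ℂ) := by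
      intro i
      rw [mul_comm]
      exact hterm i j
    rw [Finset.sum_congr rfl fun i _ => h2 i] at h
    exact_mod_cast h
  have hpnn : ∀ i j, 0 ≤ p i j := fun i j => Complex.normSq_nonneg _
  have hTr : (A * B⁻¹ * (B + 1)⁻¹ + B * A⁻¹ * (A + 1)⁻¹ - (A + 1)⁻¹ - (B + 1)⁻¹).trace
      = (((∑ i, ∑ j, (a i * ((b j)⁻¹ * (b j + 1)⁻¹)) * p i j)
        + (∑ i, ∑ j, (b i * ((a j)⁻¹ * (a j + 1)⁻¹)) * p j i)
        - (∑ i, (a i + 1)⁻¹) - (∑ i, (b i + 1)⁻¹) : ℝ) : ℂ) := by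
    rw [Matrix.trace_sub, Matrix.trace_sub, Matrix.trace_add, hT1, hT2, hT3, hT4]
    push_cast
    ring
  rw [hTr, Complex.real_le_real]
  -- now everything is real
  set yB : Fin n → ℝ := fun j => (μB j)⁻¹ * (μB j + 1)⁻¹ with hyB
  set yA : Fin n → ℝ := fun j => (μA j)⁻¹ * (μA j + 1)⁻¹ with hyA
  set P : Fin n → Fin n → ℝ := fun i j => p (σ i) (τ j) with hP
  have e1 : ∑ i, ∑ j, (a i * ((b j)⁻¹ * (b j + 1)⁻¹)) * p i j
      = ∑ i, ∑ j, P i j * (μA i * yB j) := by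
    rw [← Equiv.sum_comp σ (fun i => ∑ j, (a i * ((b j)⁻¹ * (b j + 1)⁻¹)) * p i j)]
    apply Finset.sum_congr rfl
    intro i _
    rw [← Equiv.sum_comp τ (fun j => (a (σ i) * ((b j)⁻¹ * (b j + 1)⁻¹)) * p (σ i) j)]
    apply Finset.sum_congr rfl
    intro j _
    simp only [hσ, hτ, Function.comp_apply, hP, hyB]
    ring
  have e2 : ∑ i, ∑ j, (b i * ((a j)⁻¹ * (a j + 1)⁻¹)) * p j i
      = ∑ i, ∑ j, P j i * (μB i * yA j) := by
    rw [← Equiv.sum_comp τ (fun i => ∑ j, (b i * ((a j)⁻¹ * (a j + 1)⁻¹)) * p j i)]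
    apply Finset.sum_congr rfl
    intro i _
    rw [← Equiv.sum_comp σ (fun j => (b (τ i) * ((a j)⁻¹ * (a j + 1)⁻¹)) * p j (τ i))]
    apply Finset.sum_congr rfl
    intro j _
    simp only [hσ, hτ, Function.comp_apply, hP, hyA]
    ring
  have e3 : ∑ i, (a i + 1)⁻¹ = ∑ i, (μA i + 1)⁻¹ := by
    rw [← Equiv.sum_comp σ (fun i => (a i + 1)⁻¹)]
    apply Finset.sum_congr rfl
    intro i _
    simp only [hσ, Function.comp_apply]
  have e4 : ∑ i, (b i + 1)⁻¹ = ∑ i, (μB i + 1)⁻¹ := by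
    rw [← Equiv.sum_comp τ (fun i => (b i + 1)⁻¹)]
    apply Finset.sum_congr rfl
    intro i _
    simp only [hτ, Function.comp_apply]
  have hProw : ∀ i, ∑ j, P i j = 1 := by
    intro i
    rw [hP]
    rw [Equiv.sum_comp τ (fun j => p (σ i) j)]
    exact hprow (σ i)
  have hPcol : ∀ j, ∑ i, P i j = 1 := by
    intro j
    rw [hP]
    rw [Equiv.sum_comp σ (fun i => p i (τ j))]
    exact hpcol (τ j)
  have hPnn : ∀ i j, 0 ≤ P i j := fun i j => hpnn _ _
  have hyBanti : Antitone yB := by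
    intro i j hij
    have h1 := hμBpos i
    have h2 := hμBpos j
    have h3 := hμB hij
    simp only [hyB]
    have i1 : (μB j)⁻¹ ≤ (μB i)⁻¹ := by
      apply inv_anti₀ h1 h3
    have i2 : (μB j + 1)⁻¹ ≤ (μB i + 1)⁻¹ := by
      apply inv_anti₀ (by linarith) (by linarith)
    apply mul_le_mul i1 i2 (by positivity) (by positivity)
  have hyAanti : Antitone yA := by
    intro i j hij
    have h1 := hμApos i
    have h2 := hμApos j
    have h3 := hμA hij
    simp only [hyA]
    have i1 : (μA j)⁻¹ ≤ (μA i)⁻¹ := by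
      apply inv_anti₀ h1 h3
    have i2 : (μA j + 1)⁻¹ ≤ (μA i + 1)⁻¹ := by
      apply inv_anti₀ (by linarith) (by linarith)
    apply mul_le_mul i1 i2 (by positivity) (by positivity)
  have k1 : ∑ i, μA i * yB i ≤ ∑ i, ∑ j, P i j * (μA i * yB j) :=
    key_fin P μA yB hPnn hProw hPcol hμA hyBanti
  have k2 : ∑ i, μB i * yA i ≤ ∑ i, ∑ j, (fun i j => P j i) i j * (μB i * yA j) :=
    key_fin (fun i j => P j i) μB yA (fun i j => hPnn j i) (fun i => hPcol i)
      (fun j => hProw j) hμB hyAanti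
  have hid : ∀ i, (μA i - μB i) ^ 2 * (1 + μA i + μB i)
      / (μA i * μB i * (1 + μA i) * (1 + μB i))
      = μA i * yB i + μB i * yA i - (μA i + 1)⁻¹ - (μB i + 1)⁻¹ := by
    intro i
    have h1 := hμApos i
    have h2 := hμBpos i
    simp only [hyA, hyB]
    field_simp
    ring
  rw [Finset.sum_congr rfl fun i _ => hid i, e1, e2, e3, e4]
  have hsplit : ∑ i, (μA i * yB i + μB i * yA i - (μA i + 1)⁻¹ - (μB i + 1)⁻¹)
      = (∑ i, μA i * yB i) + (∑ i, μB i * yA i)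
        - (∑ i, (μA i + 1)⁻¹) - (∑ i, (μB i + 1)⁻¹) := by
    rw [Finset.sum_sub_distrib, Finset.sum_sub_distrib, Finset.sum_add_distrib]
  rw [hsplit]
  have k2' : ∑ i, μB i * yA i ≤ ∑ i, ∑ j, P j i * (μB i * yA j) := k2
  linarith [k1, k2']
end

section
/- Rosen uniqueness (2-player scalar case): let A₁, A₂ ⊆ ℝ be compact convex intervals and u₁, u₂ continuously differentiable utilities, each u_k concave in its own variable. If for all (a₁',a₂') ≠ (a₁'',a₂'') in A₁×A₂ the diagonally strict concavity condition (a₁''−a₁')[∂₁u₁(a₁',a₂') − ∂₁u₁(a₁'',a₂'')] + (a₂''−a₂')[∂₂u₂(a₁',a₂') − ∂₂u₂(a₁'',a₂'')] > 0 holds, then the game has at most one Nash equilibrium. -/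
open Filter Topology Set

lemma foc {l r a x d : ℝ} {f : ℝ → ℝ} (ha : a ∈ Set.Icc l r) (hx : x ∈ Set.Icc l r)
    (hd : HasDerivAt f d a) (hmax : ∀ y ∈ Set.Icc l r, f y ≤ f a) :
    (x - a) * d ≤ 0 := by
  rw [hasDerivAt_iff_tendsto_slope] at hd
  rcases lt_trichotomy x a with hxa | hxa | hxa
  · -- x < a : show d ≥ 0, i.e. rule out d < 0
    rcases le_or_gt 0 d with hd0 | hd0
    · nlinarith
    · exfalso
      have h1 : ∀ᶠ y in 𝓝[≠] a, slope f a y < 0 :=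
        hd.eventually (Filter.Tendsto.eventually_lt_const (by simpa using hd0) tendsto_id) |>.mono
          (fun y hy => hy)
      have h2 : Set.Ico x a ∈ 𝓝[<] a := by
        apply Ico_mem_nhdsLT_of_mem; exact ⟨hxa, le_refl a⟩
      have hle : 𝓝[<] a ≤ 𝓝[≠] a := nhdsWithin_mono a (fun y hy => ne_of_lt hy)
      haveI : (𝓝[<] a).NeBot := inferInstance
      have : ∀ᶠ y in 𝓝[<] a, slope f a y < 0 ∧ y ∈ Set.Ico x a :=
        (h1.filter_mono hle).and (Filter.eventually_of_mem h2 (fun y hy => hy))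
      rcases this.exists with ⟨y, hys, hyI⟩
      have hylr : y ∈ Set.Icc l r := ⟨le_trans hx.1 hyI.1, le_trans (le_of_lt hyI.2) ha.2⟩
      have : f y - f a ≤ 0 := sub_nonpos.mpr (hmax y hylr)
      have hya : y - a < 0 := sub_neg.mpr hyI.2
      have := hys
      rw [slope_def_field] at this
      have : (f y - f a) / (y - a) < 0 := by
        simpa [div_eq_div_iff] using this
      have h3 : 0 < ((f y - f a) / (y - a)) * (y - a) := mul_pos_of_neg_of_neg this hya
      rw [div_mul_cancel₀ _ (ne_of_lt hya)] at h3
      linarith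
  · simp [hxa]
  · -- x > a : rule out d > 0
    rcases le_or_gt d 0 with hd0 | hd0
    · nlinarith
    · exfalso
      have h1 : ∀ᶠ y in 𝓝[≠] a, 0 < slope f a y :=
        hd.eventually (Filter.Tendsto.eventually_const_lt (by simpa using hd0) tendsto_id) |>.mono
          (fun y hy => hy)
      have h2 : Set.Ioc a x ∈ 𝓝[>] a := Ioc_mem_nhdsGT_of_mem ⟨le_refl a, hxa⟩
      have hle : 𝓝[>] a ≤ 𝓝[≠] a := nhdsWithin_mono a (fun y hy => ne_of_gt hy)
      haveI : (𝓝[>] a).NeBot := inferInstance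
      have : ∀ᶠ y in 𝓝[>] a, 0 < slope f a y ∧ y ∈ Set.Ioc a x :=
        (h1.filter_mono hle).and (Filter.eventually_of_mem h2 (fun y hy => hy))
      rcases this.exists with ⟨y, hys, hyI⟩
      have hylr : y ∈ Set.Icc l r := ⟨le_trans ha.1 (le_of_lt hyI.1), le_trans hyI.2 hx.2⟩
      have hfy : f y - f a ≤ 0 := sub_nonpos.mpr (hmax y hylr)
      have hya : 0 < y - a := sub_pos.mpr hyI.1
      rw [slope_def_field] at hys
      have : 0 < (f y - f a) / (y - a) := hys
      have h3 : 0 < ((f y - f a) / (y - a)) * (y - a) := mul_pos this hya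
      rw [div_mul_cancel₀ _ (ne_of_gt hya)] at h3
      linarith


theorem nash_equilibrium_unique_of_dsc
    (l₁ r₁ l₂ r₂ : ℝ) (h₁ : l₁ ≤ r₁) (h₂ : l₂ ≤ r₂)
    (A₁ A₂ : Set ℝ) (hA₁ : A₁ = Set.Icc l₁ r₁) (hA₂ : A₂ = Set.Icc l₂ r₂)
    (u₁ u₂ : ℝ → ℝ → ℝ)
    (d₁ d₂ : ℝ → ℝ → ℝ)
    -- u_k is differentiable in its own variable with partial derivative d_k
    (hd₁ : ∀ a₁ a₂, HasDerivAt (fun x => u₁ x a₂) (d₁ a₁ a₂) a₁)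
    (hd₂ : ∀ a₁ a₂, HasDerivAt (fun y => u₂ a₁ y) (d₂ a₁ a₂) a₂)
    -- the partial derivatives are continuous (C¹ utilities)
    (hd₁c : Continuous (fun q : ℝ × ℝ => d₁ q.1 q.2))
    (hd₂c : Continuous (fun q : ℝ × ℝ => d₂ q.1 q.2))
    -- each utility is concave in its own variable
    (hconc₁ : ∀ a₂ ∈ A₂, ConcaveOn ℝ A₁ (fun x => u₁ x a₂))
    (hconc₂ : ∀ a₁ ∈ A₁, ConcaveOn ℝ A₂ (fun y => u₂ a₁ y))
    -- diagonally strict concavity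
    (hdsc : ∀ a₁' ∈ A₁, ∀ a₂' ∈ A₂, ∀ a₁'' ∈ A₁, ∀ a₂'' ∈ A₂,
      (a₁', a₂') ≠ (a₁'', a₂'') →
      0 < (a₁'' - a₁') * (d₁ a₁' a₂' - d₁ a₁'' a₂'')
        + (a₂'' - a₂') * (d₂ a₁' a₂' - d₂ a₁'' a₂'')) :
    ∀ a₁ ∈ A₁, ∀ a₂ ∈ A₂, ∀ b₁ ∈ A₁, ∀ b₂ ∈ A₂,
      ((∀ x ∈ A₁, u₁ x a₂ ≤ u₁ a₁ a₂) ∧ (∀ y ∈ A₂, u₂ a₁ y ≤ u₂ a₁ a₂)) →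
      ((∀ x ∈ A₁, u₁ x b₂ ≤ u₁ b₁ b₂) ∧ (∀ y ∈ A₂, u₂ b₁ y ≤ u₂ b₁ b₂)) →
      (a₁, a₂) = (b₁, b₂) := by
  subst hA₁ hA₂
  intro a₁ ha₁ a₂ ha₂ b₁ hb₁ b₂ hb₂ hNa hNb
  by_contra hne
  have key := hdsc a₁ ha₁ a₂ ha₂ b₁ hb₁ b₂ hb₂ hne
  have f1 : (b₁ - a₁) * d₁ a₁ a₂ ≤ 0 := foc ha₁ hb₁ (hd₁ a₁ a₂) hNa.1
  have f2 : (b₂ - a₂) * d₂ a₁ a₂ ≤ 0 := foc ha₂ hb₂ (hd₂ a₁ a₂) hNa.2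
  have f3 : (a₁ - b₁) * d₁ b₁ b₂ ≤ 0 := foc hb₁ ha₁ (hd₁ b₁ b₂) hNb.1
  have f4 : (a₂ - b₂) * d₂ b₁ b₂ ≤ 0 := foc hb₂ ha₂ (hd₂ b₁ b₂) hNb.2
  nlinarith [key, f1, f2, f3, f4]
end
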